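/- arXiv:2604.23226 — 4 statements merged into one kernel-verified Lean document; each statement's English description precedes it below -/
import Mathlib

section
/- If a finite simple undirected graph G contains two edge-disjoint spanning trees, then there exists a happy labeling λ of the edges of G such that the temporal graph (G,λ) is temporally connected. -/
/-- An undirected temporal graph: a simple graph together with a finite nonempty
set of positive integer time labels on each edge. -/
structure TemporalGraph (V : Type*) where
  G : SimpleGraph V
  lab : Sym2 V → Finset ℕ
  lab_nonempty : ∀ e ∈ G.edgeSet, (lab e).Nonempty
  lab_pos : ∀ e ∈ G.edgeSet, ∀ t ∈ lab e, 0 < t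

/-- `IsTemporalPath T r verts times` : `verts` is a path in the underlying graph of `T`,
traversed at the times `times` (one label per edge, chosen from the label sets),
with consecutive times related by `r` (`≤` for nonstrict, `<` for strict paths). -/
structure IsTemporalPath {V : Type*} (T : TemporalGraph V) (r : ℕ → ℕ → Prop)
    (verts : List V) (times : List ℕ) : Prop where
  nodup : verts.Nodup
  length_eq : verts.length = times.length + 1
  mono : times.Chain' r
  adj : ∀ i (h : i < times.length),
    T.G.Adj (verts[i]'(by omega)) (verts[i + 1]'(by omega))
  mem_lab : ∀ i (h : i < times.length),
    times[i] ∈ T.lab s(verts[i]'(by omega), verts[i + 1]'(by omega))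

/-- Temporal reachability from `u` to `v` by a temporal path all of whose vertices lie in `S`
(i.e. reachability in the subgraph induced by `S`). -/
def TReachWithin {V : Type*} (T : TemporalGraph V) (r : ℕ → ℕ → Prop) (S : Set V)
    (u v : V) : Prop :=
  ∃ verts times, IsTemporalPath T r verts times ∧
    verts.head? = some u ∧ verts.getLast? = some v ∧ ∀ x ∈ verts, x ∈ S

/-- Temporal reachability in the whole graph. -/
def TReach {V : Type*} (T : TemporalGraph V) (r : ℕ → ℕ → Prop) (u v : V) : Prop :=
  TReachWithin T r Set.univ u v

/-- The subgraph of `T` induced by `S` is temporally connected. -/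
def TemporallyConnectedOn {V : Type*} (T : TemporalGraph V) (r : ℕ → ℕ → Prop)
    (S : Set V) : Prop :=
  ∀ u ∈ S, ∀ v ∈ S, u ≠ v → TReachWithin T r S u v

/-- `T` is temporally connected. -/
def TemporallyConnected {V : Type*} (T : TemporalGraph V) (r : ℕ → ℕ → Prop) : Prop :=
  TemporallyConnectedOn T r Set.univ

/-- `T` is simple: every edge carries exactly one time label. -/
def TemporalGraph.Simple {V : Type*} (T : TemporalGraph V) : Prop :=
  ∀ e ∈ T.G.edgeSet, (T.lab e).card = 1

/-- `T` is happy: simple, and edges sharing a vertex have disjoint label sets. -/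
def TemporalGraph.Happy {V : Type*} (T : TemporalGraph V) : Prop :=
  T.Simple ∧ ∀ e₁ ∈ T.G.edgeSet, ∀ e₂ ∈ T.G.edgeSet, e₁ ≠ e₂ →
    (∃ v, v ∈ e₁ ∧ v ∈ e₂) → Disjoint (T.lab e₁) (T.lab e₂)

namespace TCAux

lemma getElem_eq_of_eq {α : Type*} (l : List α) {i j : ℕ} (h : i = j) (hi : i < l.length) :
    l[i]'hi = l[j]'(h ▸ hi) := by subst h; rfl

lemma head?_getElem {α : Type*} (l : List α) (h : 0 < l.length) :
    l.head? = some (l[0]'h) := by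
  cases l with
  | nil => simp at h
  | cons a t => simp

lemma getLast?_getElem {α : Type*} (l : List α) (h : 0 < l.length) :
    l.getLast? = some (l[l.length - 1]'(by omega)) := by
  rw [List.getLast?_eq_getElem?, List.getElem?_eq_getElem]

structure IsTWalk {V : Type*} (T : TemporalGraph V) (verts : List V) (times : List ℕ) : Prop where
  length_eq : verts.length = times.length + 1
  pw : times.Pairwise (· ≤ ·)
  adj : ∀ i (h : i < times.length),
    T.G.Adj (verts[i]'(by omega)) (verts[i + 1]'(by omega))
  mem_lab : ∀ i (h : i < times.length),
    times[i] ∈ T.lab s(verts[i]'(by omega), verts[i + 1]'(by omega))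

lemma IsTWalk.drop {V : Type*} {T : TemporalGraph V} {verts : List V} {times : List ℕ}
    (h : IsTWalk T verts times) (k : ℕ) (hk : k ≤ times.length) :
    IsTWalk T (verts.drop k) (times.drop k) where
  length_eq := by have := h.length_eq; simp only [List.length_drop]; omega
  pw := h.pw.sublist (List.drop_sublist k times)
  adj := by
    intro i hi
    have hi' : i < times.length - k := by simpa using hi
    have h1 : k + i < times.length := by omega
    have := h.adj (k + i) h1
    simp only [List.getElem_drop]
    exact this
  mem_lab := by
    intro i hi
    have hi' : i < times.length - k := by simpa using hi
    have h1 : k + i < times.length := by omega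
    have := h.mem_lab (k + i) h1
    simp only [List.getElem_drop]
    exact this



lemma twalk_reduce {V : Type*} {T : TemporalGraph V} :
    ∀ (n : ℕ) (verts : List V) (times : List ℕ), verts.length ≤ n →
    IsTWalk T verts times → verts ≠ [] →
    ∃ verts' times', IsTemporalPath T (· ≤ ·) verts' times' ∧
      verts'.head? = verts.head? ∧ verts'.getLast? = verts.getLast? ∧
      verts'.Sublist verts ∧ times'.Sublist times := by
  intro n
  induction n with
  | zero =>
    intro verts times h _ hne
    cases verts <;> simp_all
  | succ n ih =>
    intro verts times hlen hw hne
    match verts, hne with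
    | x :: rest, _ =>
    have hle := hw.length_eq
    by_cases hx : x ∈ rest
    · -- jump to the occurrence of x inside rest
      obtain ⟨i, hi, hxi⟩ := List.getElem_of_mem hx
      have hit : i + 1 ≤ times.length := by simp at hle; omega
      have hw2 := hw.drop (i + 1) hit
      have hlen2 : ((x :: rest).drop (i + 1)).length ≤ n := by
        simp only [List.length_drop]
        simp at hlen ⊢; omega
      have hne2 : (x :: rest).drop (i + 1) ≠ [] := by
        have : ((x :: rest).drop (i + 1)).length ≠ 0 := by
          simp only [List.length_drop]; simp; omega
        intro h; rw [h] at this; simp at this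
      obtain ⟨v', t', hp, hh, hl, hsv, hst⟩ := ih _ _ hlen2 hw2 hne2
      refine ⟨v', t', hp, ?_, ?_, hsv.trans (List.drop_sublist _ _),
        hst.trans (List.drop_sublist _ _)⟩
      · rw [hh]
        have h0 : 0 < ((x :: rest).drop (i + 1)).length := by
          simp only [List.length_drop]; simp; omega
        rw [head?_getElem _ h0, List.getElem_drop]
        simp [hxi]
      · rw [hl, List.getLast?_drop]
        have h9 : ¬ (x :: rest).length ≤ i + 1 := by simp; omega
        rw [if_neg h9]
    · -- x ∉ rest
      cases rest with
      | nil =>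
        have ht0 : times = [] := by
          have h1 := hle
          simp only [List.length_cons, List.length_nil] at h1
          exact List.length_eq_zero_iff.mp (by omega)
        subst ht0
        exact ⟨[x], [], ⟨by simp, by simp, by exact List.isChain_nil, by intro i h; simp at h,
          by intro i h; simp at h⟩, rfl, rfl, List.Sublist.refl _, List.Sublist.refl _⟩
      | cons y rest' =>
        cases times with
        | nil => simp at hle
        | cons t0 tl =>
        have hw2 : IsTWalk T (y :: rest') tl := by
          have := hw.drop 1 (by simp)
          simpa using this
        obtain ⟨v', t', hp, hh, hl, hsv, hst⟩ := ih (y :: rest') tl (by simp at hlen ⊢; omega)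
          hw2 (by simp)
        have hv'ne : v' ≠ [] := by
          intro h; rw [h] at hh; simp at hh
        have hv0 : v'[0]'(by cases v' <;> simp_all) = y := by
          rw [head?_getElem v' (by cases v' <;> simp_all)] at hh
          simpa using hh
        refine ⟨x :: v', t0 :: t', ?_, by simp, ?_, hsv.cons₂ x, hst.cons₂ t0⟩
        · refine { nodup := ?_, length_eq := ?_, mono := ?_, adj := ?_, mem_lab := ?_ }
          · simp only [List.nodup_cons]
            refine ⟨fun hmem => hx ?_, hp.nodup⟩
            exact hsv.subset hmem
          · simp [hp.length_eq]
          · rw [List.Chain', List.isChain_cons]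
            refine ⟨?_, hp.mono⟩
            intro z hz
            -- z is head of t', t' sublist of tl, t0 ≤ everything in tl
            have hzmem : z ∈ tl := hst.subset (by
              cases t' with
              | nil => simp at hz
              | cons a b => simp at hz; simp [hz])
            exact List.rel_of_pairwise_cons hw.pw hzmem
          · intro i hi
            obtain _ | j := i
            · simp only [List.getElem_cons_zero, List.getElem_cons_succ]
              rw [hv0]
              have := hw.adj 0 (by simp)
              simpa using this
            · simp only [List.getElem_cons_succ]
              exact hp.adj j (by simpa using hi)
          · intro i hi
            obtain _ | j := i
            · simp only [List.getElem_cons_zero, List.getElem_cons_succ]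
              rw [hv0]
              have := hw.mem_lab 0 (by simp)
              simpa using this
            · simp only [List.getElem_cons_succ]
              exact hp.mem_lab j (by simpa using hi)
        · rw [List.getLast?_cons_cons, ← hl]
          cases v' with
          | nil => exact absurd rfl hv'ne
          | cons a t => simp [List.getLast?_cons_cons]


lemma exists_desc {V : Type*} {H : SimpleGraph V} (hc : H.Connected) (r : V) :
    ∀ (n : ℕ) (u : V), H.dist u r = n →
    ∃ l : List V, l.length = n + 1 ∧ l.head? = some u ∧ l.getLast? = some r ∧
      (∀ i (h : i + 1 < l.length), H.Adj (l[i]'(by omega)) (l[i+1]'h)) ∧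
      (∀ i (h : i < l.length), H.dist (l[i]'h) r = n - i) := by
  intro n
  induction n with
  | zero =>
    intro u h
    have : u = r := (hc.dist_eq_zero_iff).mp h
    subst this
    refine ⟨[u], by simp, by simp, by simp, ?_, ?_⟩
    · intro i hi; simp at hi
    · intro i hi; simp at hi
      subst hi; simpa using h
  | succ n ih =>
    intro u h
    obtain ⟨w, hw⟩ := hc.exists_walk_length_eq_dist u r
    cases w with
    | nil => rw [h] at hw; simp at hw
    | @cons _ u' _ ha p =>
      have hpl : p.length = n := by
        rw [h] at hw; simpa using hw
      have hd : H.dist u' r = n := by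
        apply le_antisymm
        · rw [← hpl]; exact SimpleGraph.dist_le p
        · obtain ⟨q, hq⟩ := hc.exists_walk_length_eq_dist u' r
          have : H.dist u r ≤ (SimpleGraph.Walk.cons ha q).length := SimpleGraph.dist_le _
          rw [h] at this
          simpa [hq] using this
      obtain ⟨l, hlen, hhead, hlast, hadj, hdist⟩ := ih u' hd
      have hl0 : l[0]'(by omega) = u' := by
        cases l with
        | nil => simp at hlen
        | cons a t => simpa using hhead
      refine ⟨u :: l, by simp [hlen], by simp, ?_, ?_, ?_⟩
      · cases l with
        | nil => simp at hlen
        | cons a t => simpa [List.getLast?_cons_cons] using hlast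
      · intro i hi
        obtain _ | j := i
        · simpa [hl0] using ha
        · simp only [List.getElem_cons_succ]
          exact hadj j (by simpa using hi)
      · intro i hi
        obtain _ | j := i
        · simpa using h
        · simp only [List.getElem_cons_succ]
          have := hdist j (by simpa using hi)
          rw [this]; omega


end TCAux

open TCAux in
/-- If a finite simple undirected graph `G` contains two edge-disjoint spanning
trees, then there exists a happy labeling of the edges of `G` such that the resulting
temporal graph is temporally connected. -/
theorem exists_happy_tc_labeling_of_two_spanning_trees {V : Type*} [Fintype V]
    (G : SimpleGraph V) (T₁ T₂ : SimpleGraph V)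
    (hle₁ : T₁ ≤ G) (hle₂ : T₂ ≤ G)
    (htree₁ : T₁.IsTree) (htree₂ : T₂.IsTree)
    (hdisj : Disjoint T₁.edgeSet T₂.edgeSet) :
    ∃ T : TemporalGraph V, T.G = G ∧ T.Happy ∧ TemporallyConnected T (· ≤ ·) := by
  classical
  obtain ⟨r0⟩ := htree₁.isConnected.nonempty
  have hc1 := htree₁.isConnected
  have hc2 := htree₂.isConnected
  set n := Fintype.card V with hn
  set M := Fintype.card (Sym2 V) with hM
  set eqv := Fintype.equivFin (Sym2 V) with heqv
  set idx : Sym2 V → ℕ := fun e => (eqv e : ℕ) with hidx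
  have idx_lt : ∀ e, idx e < M := fun e => (eqv e).isLt
  have idx_inj : ∀ a b, idx a = idx b → a = b := fun a b h => eqv.injective (Fin.ext h)
  set d1 : Sym2 V → ℕ :=
    Sym2.lift ⟨fun a b => max (T₁.dist a r0) (T₁.dist b r0), fun a b => max_comm _ _⟩ with hd1
  set d2 : Sym2 V → ℕ :=
    Sym2.lift ⟨fun a b => max (T₂.dist a r0) (T₂.dist b r0), fun a b => max_comm _ _⟩ with hd2
  set c : Sym2 V → ℕ := fun e =>
    if e ∈ T₁.edgeSet then n - d1 e else if e ∈ T₂.edgeSet then (n + 1) + d2 e else 2 * n + 3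
    with hc
  set f : Sym2 V → ℕ := fun e => 1 + c e * M + idx e with hf
  have f_mono : ∀ e e', c e < c e' → f e < f e' := by
    intro e e' h
    have h1 := idx_lt e
    have h2 : c e * M + M ≤ c e' * M := by
      calc c e * M + M = (c e + 1) * M := by ring
        _ ≤ c e' * M := Nat.mul_le_mul_right M h
    simp only [hf]
    omega
  have f_inj : ∀ a b, f a = f b → a = b := by
    intro a b h
    apply idx_inj
    have ha := idx_lt a
    have hb := idx_lt b
    have h' : c a * M + idx a = c b * M + idx b := by simp only [hf] at h; omega
    calc idx a = (c a * M + idx a) % M := by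
          rw [mul_comm, Nat.mul_add_mod, Nat.mod_eq_of_lt ha]
      _ = (c b * M + idx b) % M := by rw [h']
      _ = idx b := by rw [mul_comm, Nat.mul_add_mod, Nat.mod_eq_of_lt hb]
  refine ⟨⟨G, fun e => {f e}, fun e _ => ⟨f e, Finset.mem_singleton_self _⟩,
    fun e _ t ht => ?_⟩, rfl, ⟨fun e _ => ?_, fun e₁ _ e₂ _ hne _ => ?_⟩, ?_⟩
  · rw [Finset.mem_singleton] at ht; subst ht; simp only [hf]; omega
  · exact Finset.card_singleton _
  · rw [Finset.disjoint_singleton]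
    exact fun h => hne (f_inj _ _ h)
  · -- temporal connectivity
    intro u _ v _ huv
    set T : TemporalGraph V := ⟨G, fun e => {f e}, fun e _ => ⟨f e, Finset.mem_singleton_self _⟩,
      fun e _ t ht => by rw [Finset.mem_singleton] at ht; subst ht; simp only [hf]; omega⟩ with hT
    show TReachWithin T _ _ u v
    obtain ⟨l₁, hlen₁, hhead₁, hlast₁, hadj₁, hdist₁⟩ := exists_desc hc1 r0 (T₁.dist u r0) u rfl
    obtain ⟨l₂, hlen₂, hhead₂, hlast₂, hadj₂, hdist₂⟩ := exists_desc hc2 r0 (T₂.dist v r0) v rfl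
    set n₀ := T₁.dist u r0 with hn₀def
    set n₂ := T₂.dist v r0 with hn₂def
    have hn₀ : n₀ ≤ n := by
      obtain ⟨w, hw⟩ := hc1.exists_walk_length_eq_dist u r0
      have := lt_of_le_of_lt (SimpleGraph.dist_le (w.toPath : T₁.Walk u r0))
        (SimpleGraph.Walk.IsPath.length_lt w.toPath.2)
      omega
    set lr := l₂.reverse with hlr
    have hlrlen : lr.length = n₂ + 1 := by simp [hlr, hlen₂]
    have hlrget : ∀ j (h : j < lr.length), lr[j]'h = l₂[n₂ - j]'(by omega) := by
      intro j hj
      simp only [hlr]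
      rw [List.getElem_reverse]
      exact getElem_eq_of_eq l₂ (by simp [hlen₂] : l₂.length - 1 - j = n₂ - j) _
    have hlradj : ∀ j (h : j + 1 < lr.length), T₂.Adj (lr[j]'(by omega)) (lr[j + 1]'h) := by
      intro j hj
      rw [hlrget j (by omega), hlrget (j + 1) hj]
      have hb : j + 1 ≤ n₂ := by omega
      have := hadj₂ (n₂ - (j + 1)) (by simp [hlen₂]; omega)
      have he1 : n₂ - (j + 1) + 1 = n₂ - j := by omega
      rw [getElem_eq_of_eq l₂ he1] at this
      exact this.symm
    have hlrdist : ∀ j (h : j < lr.length), T₂.dist (lr[j]'h) r0 = j := by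
      intro j hj
      rw [hlrget j hj, hdist₂ (n₂ - j) (by omega)]
      omega
    have hl₁0 : l₁[0]'(by omega) = u := by
      cases l₁ with
      | nil => simp at hlen₁
      | cons a t => simpa using hhead₁
    have hl₁last : l₁[n₀]'(by omega) = r0 := by
      have h9 := getLast?_getElem l₁ (by omega)
      rw [hlast₁] at h9
      have : l₁.length - 1 = n₀ := by omega
      rw [getElem_eq_of_eq l₁ this.symm]
      exact (Option.some_inj.mp h9).symm
    have hlr0 : lr[0]'(by omega) = r0 := by
      rw [hlrget 0 (by omega)]
      have h9 := getLast?_getElem l₂ (by omega)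
      rw [hlast₂] at h9
      have : n₂ - 0 = l₂.length - 1 := by omega
      rw [getElem_eq_of_eq l₂ this]
      exact (Option.some_inj.mp h9).symm
    set L := l₁.dropLast ++ lr with hL
    have hdll : l₁.dropLast.length = n₀ := by simp [hlen₁]
    have hLlen : L.length = n₀ + n₂ + 1 := by
      simp only [hL, List.length_append, hdll, hlrlen]
      omega
    have hLget1 : ∀ i (h : i < n₀), L[i]'(by omega) = l₁[i]'(by omega) := by
      intro i hi
      simp only [hL]
      rw [List.getElem_append_left (by omega : i < l₁.dropLast.length)]
      exact List.getElem_dropLast _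
    have hLget2 : ∀ i (hi : n₀ ≤ i) (h : i < L.length), L[i]'h = lr[i - n₀]'(by omega) := by
      intro i hi h
      simp only [hL]
      rw [List.getElem_append_right (by omega : l₁.dropLast.length ≤ i)]
      exact getElem_eq_of_eq lr (by omega : i - l₁.dropLast.length = i - n₀) _
    have hLget1' : ∀ i (h : i ≤ n₀), L[i]'(by omega) = l₁[i]'(by omega) := by
      intro i hi
      rcases lt_or_eq_of_le hi with h' | h'
      · exact hLget1 i h'
      · subst h'
        rw [hLget2 n₀ le_rfl (by omega)]
        have h0 : n₀ - n₀ = 0 := by omega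
        rw [getElem_eq_of_eq lr h0, hlr0, hl₁last]
    set tf : ℕ → ℕ := fun i =>
      if h : i + 1 < L.length then f s(L[i]'(by omega), L[i + 1]'h) else 0 with htf
    set m := n₀ + n₂ with hm
    set times := List.ofFn (fun k : Fin m => tf k.1) with htimes
    have htlen : times.length = m := by simp [htimes]
    have htget : ∀ i (h : i < m),
        times[i]'(by omega) = f s(L[i]'(by omega), L[i + 1]'(by omega)) := by
      intro i hi
      simp only [htimes]
      rw [List.getElem_ofFn]
      simp only [htf]
      rw [dif_pos (by omega)]
    have edgework : ∀ i (h : i + 1 < L.length),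
        G.Adj (L[i]'(by omega)) (L[i + 1]'h) ∧
        c s(L[i]'(by omega), L[i + 1]'h) =
          (if i < n₀ then n - n₀ + i else n + 2 + (i - n₀)) := by
      intro i hi
      by_cases hcase : i < n₀
      · rw [hLget1 i hcase, hLget1' (i + 1) (by omega)]
        have hadj := hadj₁ i (by omega)
        have hmem : s(l₁[i]'(by omega), l₁[i + 1]'(by omega)) ∈ T₁.edgeSet :=
          (SimpleGraph.mem_edgeSet _).mpr hadj
        refine ⟨hle₁ hadj, ?_⟩
        rw [if_pos hcase]
        simp only [hc]
        rw [if_pos hmem]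
        simp only [hd1, Sym2.lift_mk]
        rw [hdist₁ i (by omega), hdist₁ (i + 1) (by omega)]
        have : max (n₀ - i) (n₀ - (i + 1)) = n₀ - i := by omega
        rw [this]
        omega
      · push_neg at hcase
        rw [hLget2 i hcase (by omega), hLget2 (i + 1) (by omega) hi]
        have he1 : i + 1 - n₀ = (i - n₀) + 1 := by omega
        rw [getElem_eq_of_eq lr he1]
        have hadj := hlradj (i - n₀) (by omega)
        have hmem : s(lr[i - n₀]'(by omega), lr[i - n₀ + 1]'(by omega)) ∈ T₂.edgeSet :=
          (SimpleGraph.mem_edgeSet _).mpr hadj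
        have hnot : s(lr[i - n₀]'(by omega), lr[i - n₀ + 1]'(by omega)) ∉ T₁.edgeSet :=
          Set.disjoint_right.mp hdisj hmem
        refine ⟨hle₂ hadj, ?_⟩
        rw [if_neg (by omega : ¬ i < n₀)]
        simp only [hc]
        rw [if_neg hnot, if_pos hmem]
        simp only [hd2, Sym2.lift_mk]
        rw [hlrdist (i - n₀) (by omega), hlrdist (i - n₀ + 1) (by omega)]
        omega
    have hwalk : IsTWalk T L times := by
      refine { length_eq := by omega, pw := ?_, adj := ?_, mem_lab := ?_ }
      · rw [List.pairwise_iff_getElem]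
        intro i j hi hj hij
        rw [htlen] at hi hj
        rw [htget i hi, htget j hj]
        apply le_of_lt
        apply f_mono
        rw [(edgework i (by omega)).2, (edgework j (by omega)).2]
        split_ifs <;> omega
      · intro i hi
        rw [htlen] at hi
        exact (edgework i (by omega)).1
      · intro i hi
        rw [htlen] at hi
        rw [htget i hi]
        exact Finset.mem_singleton_self _
    obtain ⟨v', t', hp, hh, hl, _, _⟩ :=
      twalk_reduce L.length L times le_rfl hwalk (by
        intro h0
        rw [h0] at hLlen
        simp at hLlen)
    refine ⟨v', t', hp, ?_, ?_, fun x _ => Set.mem_univ x⟩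
    · rw [hh, head?_getElem L (by omega), hLget1' 0 (by omega), hl₁0]
    · rw [hl, getLast?_getElem L (by omega)]
      have h9 : L.length - 1 = n₀ + n₂ := by omega
      rw [getElem_eq_of_eq L h9, hLget2 (n₀ + n₂) (by omega) (by omega)]
      have h8 : n₀ + n₂ - n₀ = n₂ := by omega
      rw [getElem_eq_of_eq lr h8, hlrget n₂ (by omega)]
      have h7 : n₂ - n₂ = 0 := by omega
      rw [getElem_eq_of_eq l₂ h7]
      cases l₂ with
      | nil => simp at hlen₂
      | cons a t => simpa using hhead₂
end

section
/- For every integer g ≥ 4 there exists a finite 4-regular simple undirected graph whose girth is at least g and whose edge set is the union of two edge-disjoint Hamiltonian cycles. -/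
set_option linter.unusedSectionVars false

namespace TwoHamAux

open SimpleGraph Finset

def cpairs (m : ℕ) (f : ZMod m → ZMod m) : Set (Sym2 (ZMod m)) :=
  {e | ∃ t : ZMod m, e = s(f t, f (t + 1))}

def Gr (m : ℕ) (h : ZMod m → ZMod m) : SimpleGraph (ZMod m) where
  Adj x y := x ≠ y ∧ (s(x, y) ∈ cpairs m id ∨ s(x, y) ∈ cpairs m h)
  symm := by
    constructor
    rintro x y ⟨hxy, hp⟩
    exact ⟨hxy.symm, by rwa [Sym2.eq_swap]⟩
  loopless := ⟨fun x hx => hx.1 rfl⟩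

def GoodP (γ : ℕ) : Prop :=
  ∃ (m : ℕ) (h : ZMod m → ZMod m), 3 ≤ m ∧ Function.Bijective h ∧
    (∀ e ∈ cpairs m id, e ∉ cpairs m h) ∧
    (∀ (ℓ : ℕ) (u : ℕ → ZMod m), 3 ≤ ℓ →
      (∀ t, t < ℓ → (Gr m h).Adj (u t) (u (t + 1))) → u ℓ = u 0 →
      (∀ i j, i < ℓ → j < ℓ → u i = u j → i = j) → γ ≤ ℓ)

section ZModFacts
variable {m : ℕ}

lemma natCast_ne_zero (hm : 3 ≤ m) {k : ℕ} (hk1 : 0 < k) (hk : k < 3) :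
    (k : ZMod m) ≠ 0 := by
  intro h0
  rw [ZMod.natCast_eq_zero_iff] at h0
  have := Nat.le_of_dvd hk1 h0
  omega

lemma add_one_ne (hm : 3 ≤ m) (x : ZMod m) : x + 1 ≠ x := by
  intro hx
  have h1 : (1 : ZMod m) = 0 := by
    have := congrArg (· - x) hx
    simpa [add_sub_cancel_left, sub_self] using this
  exact natCast_ne_zero hm (k := 1) (by norm_num) (by norm_num) (by simpa using h1)

lemma add_two_ne (hm : 3 ≤ m) (x : ZMod m) : x + 2 ≠ x := by
  intro hx
  have h1 : (2 : ZMod m) = 0 := by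
    have := congrArg (· - x) hx
    simpa [add_sub_cancel_left, sub_self] using this
  exact natCast_ne_zero hm (k := 2) (by norm_num) (by norm_num) (by simpa using h1)

lemma cpair_ne_diag (hm : 3 ≤ m) {f : ZMod m → ZMod m} (hf : Function.Injective f)
    (t : ZMod m) : f t ≠ f (t + 1) := by
  intro he
  exact add_one_ne hm t (hf he.symm)

lemma cpair_inj (hm : 3 ≤ m) {f : ZMod m → ZMod m} (hf : Function.Injective f)
    {t t' : ZMod m} (e : s(f t, f (t + 1)) = s(f t', f (t' + 1))) : t = t' := by
  rw [Sym2.eq_iff] at e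
  rcases e with ⟨e1, _⟩ | ⟨e1, e2⟩
  · exact hf e1
  · have h1 : t = t' + 1 := hf e1
    have h2 : t + 1 = t' := hf e2
    exfalso
    apply add_two_ne hm t'
    have : t' + 1 + 1 = t' := by rw [← h1]; exact h2
    calc t' + 2 = t' + 1 + 1 := by ring
    _ = t' := this

end ZModFacts

section Codes
variable {m : ℕ} [NeZero m]

def codeS (u v : ZMod m) : ℕ :=
  if u.val < v.val then u.val * m + v.val else v.val * m + u.val

def sgn (u v : ZMod m) : ℤ := if u.val < v.val then 1 else -1

def nu (M : ℕ) (u v : ZMod m) : ℤ := sgn u v * (M : ℤ) ^ (codeS u v)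

omit [NeZero m] in
lemma codeS_symm (u v : ZMod m) : codeS v u = codeS u v := by
  unfold codeS
  rcases lt_trichotomy u.val v.val with h | h | h
  · simp [h, not_lt.2 h.le]
  · simp [h]
  · simp [h, not_lt.2 h.le]

lemma val_ne_of_ne {u v : ZMod m} (huv : u ≠ v) : u.val ≠ v.val :=
  fun he => huv (ZMod.val_injective m he)

lemma sgn_antisymm {u v : ZMod m} (huv : u ≠ v) : sgn v u = - sgn u v := by
  have h := val_ne_of_ne huv
  unfold sgn
  rcases lt_trichotomy u.val v.val with hh | hh | hh
  · simp [hh, not_lt.2 hh.le]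
  · exact absurd hh h
  · simp [hh, not_lt.2 hh.le]

lemma nu_antisymm {M : ℕ} {u v : ZMod m} (huv : u ≠ v) : nu M v u = - nu M u v := by
  unfold nu
  rw [codeS_symm, sgn_antisymm huv]; ring

lemma codeS_lt (u v : ZMod m) : codeS u v < m * m := by
  have hu := ZMod.val_lt u
  have hv := ZMod.val_lt v
  unfold codeS
  split <;> nlinarith

lemma codeS_inj {u v u' v' : ZMod m} (huv : u ≠ v) (huv' : u' ≠ v')
    (he : codeS u v = codeS u' v') : s(u, v) = s(u', v') := by
  have hu := ZMod.val_lt u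
  have hv := ZMod.val_lt v
  have hu' := ZMod.val_lt u'
  have hv' := ZMod.val_lt v'
  have h := val_ne_of_ne huv
  have h' := val_ne_of_ne huv'
  unfold codeS at he
  have key : ∀ a b a' b' : ℕ, b < m → b' < m → a * m + b = a' * m + b' →
      a = a' ∧ b = b' := by
    intro a b a' b' hb hb' heq
    have ha : a = a' := by
      rcases lt_trichotomy a a' with hh | hh | hh
      · exfalso; have h3 : a + 1 ≤ a' := hh; nlinarith
      · exact hh
      · exfalso; have h3 : a' + 1 ≤ a := hh; nlinarith
    subst ha
    exact ⟨rfl, by omega⟩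
  split at he <;> split at he
  · obtain ⟨h1, h2⟩ := key _ _ _ _ hv hv' he
    rw [ZMod.val_injective m h1, ZMod.val_injective m h2]
  · obtain ⟨h1, h2⟩ := key _ _ _ _ hv hu' he
    rw [ZMod.val_injective m h1, ZMod.val_injective m h2, Sym2.eq_swap]
  · obtain ⟨h1, h2⟩ := key _ _ _ _ hu hv' he
    rw [ZMod.val_injective m h1, ZMod.val_injective m h2, Sym2.eq_swap]
  · obtain ⟨h1, h2⟩ := key _ _ _ _ hu hu' he
    rw [ZMod.val_injective m h1, ZMod.val_injective m h2]

end Codes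

section IntLemmas

lemma L2 {M K : ℕ} (hM : 2 ≤ M) (s : Finset ℕ) (hs : ∀ j ∈ s, j < K) (c : ℕ → ℤ)
    (hc : ∀ j ∈ s, |c j| ≤ (M : ℤ) - 1) :
    |∑ j ∈ s, c j * (M : ℤ) ^ j| ≤ (M : ℤ) ^ K - 1 := by
  have hM1 : (1 : ℤ) ≤ (M : ℤ) := by exact_mod_cast Nat.one_le_of_lt hM
  calc |∑ j ∈ s, c j * (M : ℤ) ^ j| ≤ ∑ j ∈ s, |c j * (M : ℤ) ^ j| :=
        abs_sum_le_sum_abs _ _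
    _ ≤ ∑ j ∈ s, ((M : ℤ) - 1) * (M : ℤ) ^ j := by
        apply Finset.sum_le_sum
        intro j hj
        rw [abs_mul, abs_pow, abs_of_nonneg (by positivity : (0:ℤ) ≤ (M:ℤ))]
        exact mul_le_mul_of_nonneg_right (hc j hj) (by positivity)
    _ ≤ ∑ j ∈ Finset.range K, ((M : ℤ) - 1) * (M : ℤ) ^ j := by
        apply Finset.sum_le_sum_of_subset_of_nonneg
        · intro j hj; exact Finset.mem_range.2 (hs j hj)
        · intro j _ _; exact mul_nonneg (by linarith) (by positivity)
    _ = (M : ℤ) ^ K - 1 := by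
        have h4 : ∑ j ∈ Finset.range K, ((M : ℤ) - 1) * (M : ℤ) ^ j
            = (∑ j ∈ Finset.range K, (M : ℤ) ^ j) * ((M : ℤ) - 1) := by
          rw [Finset.sum_mul]
          exact Finset.sum_congr rfl (fun j _ => mul_comm _ _)
        rw [h4, geom_sum_mul]

lemma L1 {M : ℕ} (hM : 2 ≤ M) (s : Finset ℕ) (c : ℕ → ℤ)
    (hbd : ∀ j ∈ s, |c j| < (M : ℤ)) {j₀ : ℕ} (hj₀ : j₀ ∈ s) (hnz : c j₀ ≠ 0) :
    ∑ j ∈ s, c j * (M : ℤ) ^ j ≠ 0 := by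
  intro hsum
  set s' := s.filter (fun j => c j ≠ 0) with hs'
  have hsum' : ∑ j ∈ s', c j * (M : ℤ) ^ j = 0 := by
    rw [← hsum]
    apply Finset.sum_filter_of_ne
    intro j _ hne hc0
    exact hne (by rw [hc0]; ring)
  have hne : s'.Nonempty := ⟨j₀, Finset.mem_filter.2 ⟨hj₀, hnz⟩⟩
  set jm := s'.min' hne with hjm
  have hjm_mem : jm ∈ s' := Finset.min'_mem _ _
  have hsplit : c jm * (M : ℤ) ^ jm + ∑ j ∈ s'.erase jm, c j * (M : ℤ) ^ j = 0 := by
    rw [← Finset.add_sum_erase _ _ hjm_mem] at hsum'; exact hsum'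
  have hdvd : ((M : ℤ) ^ (jm + 1)) ∣ ∑ j ∈ s'.erase jm, c j * (M : ℤ) ^ j := by
    apply Finset.dvd_sum
    intro j hj
    have hjmem := Finset.mem_of_mem_erase hj
    have hjne := Finset.ne_of_mem_erase hj
    have : jm < j := lt_of_le_of_ne (Finset.min'_le _ _ hjmem) (Ne.symm hjne)
    exact Dvd.dvd.mul_left (pow_dvd_pow _ this) _
  have hdvd2 : ((M : ℤ) ^ (jm + 1)) ∣ c jm * (M : ℤ) ^ jm := by
    have : c jm * (M : ℤ) ^ jm = - ∑ j ∈ s'.erase jm, c j * (M : ℤ) ^ j := by linarith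
    rw [this]; exact dvd_neg.2 hdvd
  have hMpos : (0 : ℤ) < (M : ℤ) ^ jm := by positivity
  have hdvd3 : (M : ℤ) ∣ c jm := by
    rcases hdvd2 with ⟨d, hd⟩
    rw [pow_succ] at hd
    have h2 : c jm * (M:ℤ)^jm = ((M:ℤ) * d) * (M:ℤ)^jm := by rw [hd]; ring
    exact ⟨d, mul_right_cancel₀ (ne_of_gt hMpos) h2⟩
  have hcjm : c jm ≠ 0 := (Finset.mem_filter.1 hjm_mem).2
  have := Int.eq_zero_of_abs_lt_dvd hdvd3 (hbd jm (Finset.mem_filter.1 hjm_mem).1)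
  exact hcjm this

end IntLemmas

section Lift

variable {m M N : ℕ} [NeZero m] [NeZero N]

/-- voltage of the oriented pair (u,v) -/
def alf (M N : ℕ) (u v : ZMod m) : ZMod N := ((nu M u v : ℤ) : ZMod N)

lemma alf_antisymm {u v : ZMod m} (huv : u ≠ v) : alf M N v u = - alf M N u v := by
  unfold alf; rw [nu_antisymm huv]; push_cast; ring

/-- signed coefficient of code `j` in the interval `[0,ℓ)` -/
def cf (p q : ℕ → ZMod m) (ℓ j : ℕ) : ℤ :=
  ∑ i ∈ (Finset.range ℓ).filter (fun i => codeS (p i) (q i) = j), sgn (p i) (q i)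

lemma abs_sgn (u v : ZMod m) : |sgn u v| = 1 := by
  unfold sgn; split <;> simp

lemma sgn_ne_zero (u v : ZMod m) : sgn u v ≠ 0 := by
  unfold sgn; split <;> simp

lemma abs_cf_le_card (p q : ℕ → ZMod m) (ℓ j : ℕ) :
    |cf p q ℓ j| ≤ ((Finset.range ℓ).filter (fun i => codeS (p i) (q i) = j)).card := by
  unfold cf
  calc |∑ i ∈ _, sgn (p i) (q i)| ≤ ∑ i ∈ (Finset.range ℓ).filter
        (fun i => codeS (p i) (q i) = j), |sgn (p i) (q i)| := abs_sum_le_sum_abs _ _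
    _ = _ := by
        rw [Finset.sum_congr rfl (fun i _ => abs_sgn (p i) (q i)), Finset.sum_const,
          nsmul_eq_mul, mul_one]

lemma sum_nu_eq (p q : ℕ → ZMod m) (M ℓ : ℕ) :
    ∑ i ∈ Finset.range ℓ, nu M (p i) (q i)
      = ∑ j ∈ (Finset.range ℓ).image (fun i => codeS (p i) (q i)),
          cf p q ℓ j * (M : ℤ) ^ j := by
  rw [← Finset.sum_fiberwise_of_maps_to (g := fun i => codeS (p i) (q i))
    (fun i hi => Finset.mem_image_of_mem _ hi)]
  apply Finset.sum_congr rfl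
  intro j _
  unfold cf
  rw [Finset.sum_mul]
  apply Finset.sum_congr rfl
  intro i hi
  have := (Finset.mem_filter.1 hi).2
  unfold nu
  rw [this]

/-- Main vanishing lemma: if the voltage sum of at most `M-1` signed steps vanishes
mod `N`, then every signed code-coefficient vanishes. -/
lemma main_vanish {p q : ℕ → ZMod m} {ℓ : ℕ}
    (hM : 2 ≤ M) (hN : M ^ (m * m) < N)
    (hbd : ∀ j, |cf p q ℓ j| ≤ (M : ℤ) - 1)
    (h0 : ∑ i ∈ Finset.range ℓ, alf M N (p i) (q i) = 0) :
    ∀ j, cf p q ℓ j = 0 := by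
  classical
  set T : ℤ := ∑ i ∈ Finset.range ℓ, nu M (p i) (q i) with hT
  have hcast : ((T : ℤ) : ZMod N) = 0 := by
    rw [hT]
    push_cast
    exact h0
  have hdvd : (N : ℤ) ∣ T := by
    rwa [ZMod.intCast_zmod_eq_zero_iff_dvd] at hcast
  have himg : ∀ j ∈ (Finset.range ℓ).image (fun i => codeS (p i) (q i)), j < m * m := by
    intro j hj
    obtain ⟨i, _, rfl⟩ := Finset.mem_image.1 hj
    exact codeS_lt _ _
  have hTbound : |T| ≤ (M : ℤ) ^ (m * m) - 1 := by
    rw [hT, sum_nu_eq]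
    exact L2 hM _ himg _ (fun j _ => hbd j)
  have hTzero : T = 0 := by
    apply Int.eq_zero_of_abs_lt_dvd hdvd
    have : ((M : ℤ)) ^ (m * m) < (N : ℤ) := by exact_mod_cast hN
    omega
  intro j
  by_contra hne
  have hjmem : j ∈ (Finset.range ℓ).image (fun i => codeS (p i) (q i)) := by
    by_contra hnm
    apply hne
    unfold cf
    apply Finset.sum_eq_zero
    intro i hi
    exfalso
    apply hnm
    have h1 := Finset.mem_filter.1 hi
    rw [← h1.2]
    exact Finset.mem_image_of_mem _ h1.1
  have := L1 hM _ _ (fun j' hj' => lt_of_le_of_lt (hbd j') (by linarith)) hjmem hne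
  rw [hT, sum_nu_eq] at hTzero
  exact this hTzero

lemma card_fiber_sum (p q : ℕ → ZMod m) (ℓ : ℕ) :
    ∑ j ∈ (Finset.range ℓ).image (fun i => codeS (p i) (q i)),
      ((Finset.range ℓ).filter (fun i => codeS (p i) (q i) = j)).card = ℓ := by
  classical
  rw [← Finset.card_eq_sum_card_fiberwise
    (fun i hi => Finset.mem_image_of_mem (fun i => codeS (p i) (q i)) hi)]
  exact Finset.card_range ℓ

lemma fiber_two {p q : ℕ → ZMod m} {ℓ j : ℕ}
    (hzero : cf p q ℓ j = 0) {i : ℕ}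
    (hi : i ∈ (Finset.range ℓ).filter (fun i => codeS (p i) (q i) = j)) :
    2 ≤ ((Finset.range ℓ).filter (fun i => codeS (p i) (q i) = j)).card := by
  classical
  by_contra hlt
  push_neg at hlt
  interval_cases hcard : ((Finset.range ℓ).filter (fun i => codeS (p i) (q i) = j)).card
  · rw [Finset.card_eq_zero] at hcard
    rw [hcard] at hi
    exact absurd hi (Finset.notMem_empty _)
  · rw [Finset.card_eq_one] at hcard
    obtain ⟨a, ha⟩ := hcard
    rw [ha] at hi
    have hia : i = a := Finset.mem_singleton.1 hi
    unfold cf at hzero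
    rw [ha, Finset.sum_singleton] at hzero
    exact sgn_ne_zero _ _ hzero

end Lift
section Enum

variable {m M N : ℕ} [NeZero m] [NeZero N]

def Sfun (M N : ℕ) (f : ZMod m → ZMod m) (t : ℕ) : ZMod N :=
  ∑ i ∈ Finset.range t, alf M N (f (i : ZMod m)) (f ((i : ZMod m) + 1))

def Efun (M N : ℕ) (f : ZMod m → ZMod m) (t : ℕ) : ZMod m × ZMod N :=
  (f (t : ZMod m), Sfun M N f t)

lemma Sfun_succ (f : ZMod m → ZMod m) (t : ℕ) :
    Sfun M N f (t + 1) = Sfun M N f t + alf M N (f (t : ZMod m)) (f ((t : ZMod m) + 1)) :=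
  Finset.sum_range_succ _ _

lemma Sfun_add_period (f : ZMod m → ZMod m) (t : ℕ) :
    Sfun M N f (t + m) = Sfun M N f t + Sfun M N f m := by
  induction t with
  | zero => simp [Sfun]
  | succ t ih =>
      have h1 : t + 1 + m = (t + m) + 1 := by omega
      rw [h1, Sfun_succ, ih, Sfun_succ]
      have hc : ((t + m : ℕ) : ZMod m) = (t : ZMod m) := by
        push_cast [ZMod.natCast_self]; ring
      rw [hc]; ring

lemma Sfun_decomp (f : ZMod m → ZMod m) (qq r : ℕ) :
    Sfun M N f (qq * m + r) = (qq : ZMod N) * Sfun M N f m + Sfun M N f r := by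
  induction qq with
  | zero => simp
  | succ qq ih =>
      have h1 : (qq + 1) * m + r = (qq * m + r) + m := by ring
      rw [h1, Sfun_add_period, ih]
      push_cast; ring

lemma Efun_period (f : ZMod m → ZMod m) : Efun M N f (m * N) = Efun M N f 0 := by
  unfold Efun
  have h1 : ((m * N : ℕ) : ZMod m) = ((0 : ℕ) : ZMod m) := by
    push_cast [ZMod.natCast_self]; ring
  have h2 : Sfun M N f (m * N) = Sfun M N f 0 := by
    have : m * N = N * m + 0 := by ring
    rw [this, Sfun_decomp, ZMod.natCast_self]; simp
  rw [h1, h2]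

lemma cd_inj_of_inj (hm3 : 3 ≤ m) {f : ZMod m → ZMod m} (hf : Function.Injective f)
    {i i' : ℕ} (hi : i < m) (hi' : i' < m)
    (he : codeS (f (i : ZMod m)) (f ((i : ZMod m) + 1))
        = codeS (f (i' : ZMod m)) (f ((i' : ZMod m) + 1))) : i = i' := by
  have h1 := codeS_inj (cpair_ne_diag hm3 hf (i : ZMod m)) (cpair_ne_diag hm3 hf (i' : ZMod m)) he
  have h2 := cpair_inj hm3 hf h1
  have h3 : ((i : ZMod m)).val = ((i' : ZMod m)).val := by rw [h2]
  rwa [ZMod.val_natCast_of_lt hi, ZMod.val_natCast_of_lt hi'] at h3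

lemma tau_ne (hm3 : 3 ≤ m) {f : ZMod m → ZMod m} (hf : Function.Injective f)
    (hM : 2 ≤ M) (hN : M ^ (m * m) < N) : Sfun M N f m ≠ 0 := by
  classical
  intro h0
  set p : ℕ → ZMod m := fun i => f (i : ZMod m) with hp
  set q : ℕ → ZMod m := fun i => f ((i : ZMod m) + 1) with hq
  have h0' : ∑ i ∈ Finset.range m, alf M N (p i) (q i) = 0 := h0
  have hsingle : ∀ j i, i ∈ (Finset.range m).filter (fun i => codeS (p i) (q i) = j) →
      (Finset.range m).filter (fun i => codeS (p i) (q i) = j) = {i} := by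
    intro j i hi
    apply Finset.eq_singleton_iff_unique_mem.2
    refine ⟨hi, ?_⟩
    intro x hx
    have h1 := Finset.mem_filter.1 hx
    have h2 := Finset.mem_filter.1 hi
    exact cd_inj_of_inj hm3 hf (Finset.mem_range.1 h1.1) (Finset.mem_range.1 h2.1)
      (h1.2.trans h2.2.symm)
  have hbd : ∀ j, |cf p q m j| ≤ (M : ℤ) - 1 := by
    intro j
    rcases Finset.eq_empty_or_nonempty
        ((Finset.range m).filter (fun i => codeS (p i) (q i) = j)) with he | ⟨i, hi⟩
    · unfold cf; rw [he, Finset.sum_empty]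
      simp only [abs_zero]
      have : (2 : ℤ) ≤ (M : ℤ) := by exact_mod_cast hM
      linarith
    · have := hsingle j i hi
      unfold cf; rw [this, Finset.sum_singleton]
      rw [abs_sgn]
      have : (2 : ℤ) ≤ (M : ℤ) := by exact_mod_cast hM
      linarith
  have hvan := main_vanish hM hN hbd h0'
  have h0m : (0 : ℕ) ∈ (Finset.range m).filter
      (fun i => codeS (p i) (q i) = codeS (p 0) (q 0)) :=
    Finset.mem_filter.2 ⟨Finset.mem_range.2 (by omega), rfl⟩
  have := hvan (codeS (p 0) (q 0))
  unfold cf at this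
  rw [hsingle _ 0 h0m, Finset.sum_singleton] at this
  exact sgn_ne_zero _ _ this

lemma Efun_inj (hm3 : 3 ≤ m) {f : ZMod m → ZMod m} (hf : Function.Injective f)
    (htau : Sfun M N f m ≠ 0) (hNp : N.Prime) {t t' : ℕ}
    (ht : t < m * N) (ht' : t' < m * N) (he : Efun M N f t = Efun M N f t') : t = t' := by
  haveI : Fact N.Prime := ⟨hNp⟩
  have hm0 : 0 < m := by omega
  have hfst : f (t : ZMod m) = f (t' : ZMod m) := congrArg Prod.fst he
  have hmod : t % m = t' % m := by
    have := hf hfst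
    rwa [ZMod.natCast_eq_natCast_iff'] at this
  have hsnd : Sfun M N f t = Sfun M N f t' := congrArg Prod.snd he
  have hdec : ∀ s : ℕ, Sfun M N f s = ((s / m : ℕ) : ZMod N) * Sfun M N f m + Sfun M N f (s % m) := by
    intro s
    conv_lhs => rw [show s = (s / m) * m + s % m by
      rw [mul_comm]; exact (Nat.div_add_mod s m).symm]
    exact Sfun_decomp f _ _
  rw [hdec t, hdec t', hmod] at hsnd
  have hq : ((t / m : ℕ) : ZMod N) = ((t' / m : ℕ) : ZMod N) := by
    have h1 : ((t / m : ℕ) : ZMod N) * Sfun M N f m = ((t' / m : ℕ) : ZMod N) * Sfun M N f m := by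
      have := add_right_cancel hsnd
      exact this
    exact mul_right_cancel₀ htau h1
  have hqlt : t / m < N := by
    rw [Nat.div_lt_iff_lt_mul hm0, mul_comm]; exact ht
  have hqlt' : t' / m < N := by
    rw [Nat.div_lt_iff_lt_mul hm0, mul_comm]; exact ht' 
  have hqq : t / m = t' / m := by
    rw [ZMod.natCast_eq_natCast_iff'] at hq
    rwa [Nat.mod_eq_of_lt hqlt, Nat.mod_eq_of_lt hqlt'] at hq
  conv_lhs => rw [← Nat.div_add_mod t m]
  conv_rhs => rw [← Nat.div_add_mod t' m]
  rw [hqq, hmod]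

def LiftAdj (h : ZMod m → ZMod m) (M N : ℕ) (x y : ZMod m × ZMod N) : Prop :=
  (Gr m h).Adj x.1 y.1 ∧ y.2 = x.2 + alf M N x.1 y.1

lemma LiftAdj.symm {h : ZMod m → ZMod m} {x y : ZMod m × ZMod N}
    (hxy : LiftAdj h M N x y) : LiftAdj h M N y x := by
  have hne : x.1 ≠ y.1 := hxy.1.ne
  refine ⟨hxy.1.symm, ?_⟩
  rw [hxy.2, alf_antisymm hne]; ring

lemma Efun_liftAdj {h : ZMod m → ZMod m} {f : ZMod m → ZMod m}
    (hedge : ∀ t : ZMod m, (Gr m h).Adj (f t) (f (t + 1))) (t : ℕ) :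
    LiftAdj h M N (Efun M N f t) (Efun M N f (t + 1)) := by
  have hc : ((t + 1 : ℕ) : ZMod m) = (t : ZMod m) + 1 := by push_cast; ring
  constructor
  · show (Gr m h).Adj (f ((t : ℕ) : ZMod m)) (f ((t + 1 : ℕ) : ZMod m))
    rw [hc]
    exact hedge _
  · show Sfun M N f (t + 1) = Sfun M N f t + alf M N (f ((t : ℕ) : ZMod m)) (f ((t + 1 : ℕ) : ZMod m))
    rw [hc]
    exact Sfun_succ f t
end Enum
section LiftGirth

variable {m M N : ℕ} [NeZero m] [NeZero N]

lemma lift_girth {γ : ℕ} (hγ : 3 ≤ γ) {h : ZMod m → ZMod m}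
    (hbase : ∀ (ℓ : ℕ) (u : ℕ → ZMod m), 3 ≤ ℓ →
      (∀ t, t < ℓ → (Gr m h).Adj (u t) (u (t + 1))) → u ℓ = u 0 →
      (∀ i j, i < ℓ → j < ℓ → u i = u j → i = j) → γ ≤ ℓ)
    (hM2 : 2 * γ + 2 ≤ M) (hN : M ^ (m * m) < N)
    {w : ℕ → ZMod m × ZMod N} {ℓ : ℕ} (h3 : 3 ≤ ℓ)
    (hadj : ∀ t, t < ℓ → LiftAdj h M N (w t) (w (t + 1)))
    (hclose : w ℓ = w 0)
    (hinj : ∀ i j, i < ℓ → j < ℓ → w i = w j → i = j) :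
    2 * γ ≤ ℓ := by
  classical
  by_contra hcon
  push_neg at hcon
  have hM : 2 ≤ M := by omega
  set p : ℕ → ZMod m := fun t => (w t).1 with hp
  set q : ℕ → ZMod m := fun t => (w (t + 1)).1 with hq
  have hGadj : ∀ t, t < ℓ → (Gr m h).Adj (p t) (p (t + 1)) := fun t ht => (hadj t ht).1
  have hne : ∀ t, t < ℓ → p t ≠ p (t + 1) := fun t ht => (hGadj t ht).ne
  -- telescoping
  have htel : ∀ n, n ≤ ℓ →
      (w n).2 = (w 0).2 + ∑ i ∈ Finset.range n, alf M N (p i) (q i) := by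
    intro n
    induction n with
    | zero => simp
    | succ n ih =>
        intro hn
        have h1 := ih (by omega)
        rw [Finset.sum_range_succ, ← add_assoc, ← h1, (hadj n (by omega)).2]
  have h0 : ∑ i ∈ Finset.range ℓ, alf M N (p i) (q i) = 0 := by
    have h1 := htel ℓ le_rfl
    rw [hclose] at h1
    have h2 : (w 0).2 + ∑ i ∈ Finset.range ℓ, alf M N (p i) (q i) = (w 0).2 + 0 := by
      rw [add_zero]; exact h1.symm
    exact add_left_cancel h2
  -- coefficient bound
  have hbd : ∀ j, |cf p q ℓ j| ≤ (M : ℤ) - 1 := by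
    intro j
    calc |cf p q ℓ j| ≤ ((Finset.range ℓ).filter (fun i => codeS (p i) (q i) = j)).card :=
          abs_cf_le_card p q ℓ j
      _ ≤ ((Finset.range ℓ).card : ℤ) := by
          exact_mod_cast Finset.card_filter_le _ _
      _ ≤ (M : ℤ) - 1 := by
          rw [Finset.card_range]
          have : ℓ + 1 ≤ M := by omega
          have := (Nat.cast_le (α := ℤ)).2 this
          push_cast at this
          linarith
  have hvan := main_vanish hM hN hbd h0
  -- non-backtracking
  have hNB : ∀ t, t + 2 ≤ ℓ → p (t + 2) ≠ p t := by
    intro t ht heq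
    have e1 := (hadj t (by omega)).2
    have e2 := (hadj (t + 1) (by omega)).2
    have hne1 : (w t).1 ≠ (w (t + 1)).1 := hne t (by omega)
    have hsnd : (w (t + 2)).2 = (w t).2 := by
      have heq' : (w (t + 1 + 1)).1 = (w t).1 := heq
      rw [e2, e1]
      have : alf M N (w (t + 1)).1 (w (t + 1 + 1)).1 = - alf M N (w t).1 (w (t + 1)).1 := by
        rw [heq']
        exact alf_antisymm hne1
      rw [this]; ring
    have hw : w (t + 2) = w t := Prod.ext heq hsnd
    rcases Nat.lt_or_ge (t + 2) ℓ with hlt | hge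
    · have := hinj (t + 2) t hlt (by omega) hw
      omega
    · have hteq : t + 2 = ℓ := by omega
      have hw0 : w t = w 0 := by rw [← hclose, ← hteq, hw]
      have := hinj t 0 (by omega) (by omega) hw0
      omega
  -- minimal return distance
  have hex : ∃ d, 0 < d ∧ ∃ i, i + d ≤ ℓ ∧ p (i + d) = p i :=
    ⟨ℓ, by omega, 0, by omega, by
      show (w (0 + ℓ)).1 = (w 0).1
      rw [Nat.zero_add, hclose]⟩
  have hd₀spec := Nat.find_spec hex
  set d₀ := Nat.find hex with hd₀
  obtain ⟨hd₀pos, i₀, hi₀, hpi₀⟩ := hd₀spec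
  have hmin : ∀ d, d < d₀ → ¬(0 < d ∧ ∃ i, i + d ≤ ℓ ∧ p (i + d) = p i) :=
    fun d hd => Nat.find_min hex hd
  have hd3 : 3 ≤ d₀ := by
    rcases Nat.lt_or_ge d₀ 3 with hlt | hge
    · exfalso
      have hd12 : d₀ = 1 ∨ d₀ = 2 := by omega
      rcases hd12 with h1 | h1 <;> rw [h1] at hpi₀ hi₀
      · exact hne i₀ (by omega) hpi₀.symm
      · exact hNB i₀ (by omega) hpi₀
    · exact hge
  -- window injectivity
  have hwin : ∀ r r', r < d₀ → r' < d₀ → p (i₀ + r) = p (i₀ + r') → r = r' := by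
    intro r r' hr hr' heq
    rcases lt_trichotomy r r' with hlt | he | hlt
    · exfalso
      refine hmin (r' - r) (by omega) ⟨by omega, i₀ + r, by omega, ?_⟩
      rw [show i₀ + r + (r' - r) = i₀ + r' by omega]
      exact heq.symm
    · exact he
    · exfalso
      refine hmin (r - r') (by omega) ⟨by omega, i₀ + r', by omega, ?_⟩
      rw [show i₀ + r' + (r - r') = i₀ + r by omega]
      exact heq
  have hwin' : ∀ r r', r ≤ d₀ → r' ≤ d₀ → p (i₀ + r) = p (i₀ + r') →
      r = r' ∨ (r = 0 ∧ r' = d₀) ∨ (r = d₀ ∧ r' = 0) := by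
    intro r r' hr hr' heq
    rcases Nat.lt_or_ge r d₀ with h1 | h1 <;> rcases Nat.lt_or_ge r' d₀ with h2 | h2
    · exact Or.inl (hwin r r' h1 h2 heq)
    · have hr'd : r' = d₀ := by omega
      subst hr'd
      rw [hpi₀] at heq
      have := hwin r 0 h1 (by omega) (by rw [Nat.add_zero]; exact heq)
      omega
    · have hrd : r = d₀ := by omega
      subst hrd
      rw [hpi₀] at heq
      have := hwin 0 r' (by omega) h2 (by rw [Nat.add_zero]; exact heq)
      omega
    · omega
  -- base girth applies to the extracted cycle
  have hγd : γ ≤ d₀ := by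
    apply hbase d₀ (fun t => p (i₀ + t)) hd3
    · intro t ht
      have := hGadj (i₀ + t) (by omega)
      rwa [show i₀ + t + 1 = i₀ + (t + 1) by ring] at this
    · exact hpi₀
    · intro i j hi hj heq
      exact hwin i j hi hj heq
  -- distinct codes on the window
  have hcdinj : ∀ r r', r < d₀ → r' < d₀ →
      codeS (p (i₀ + r)) (p (i₀ + r + 1)) = codeS (p (i₀ + r')) (p (i₀ + r' + 1)) →
      r = r' := by
    intro r r' hr hr' he
    have hsym := codeS_inj (hne _ (by omega)) (hne _ (by omega)) he
    rw [Sym2.eq_iff] at hsym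
    rcases hsym with ⟨e1, e2⟩ | ⟨e1, e2⟩
    · exact hwin r r' hr hr' e1
    · have k1 := hwin' r (r' + 1) (by omega) (by omega)
        (by rw [show i₀ + (r' + 1) = i₀ + r' + 1 by ring]; exact e1)
      have k2 := hwin' (r + 1) r' (by omega) (by omega)
        (by rw [show i₀ + (r + 1) = i₀ + r + 1 by ring]; exact e2)
      omega
  -- counting
  set Im := (Finset.range ℓ).image (fun i => codeS (p i) (q i)) with hIm
  set S' := (Finset.range d₀).image (fun r => codeS (p (i₀ + r)) (p (i₀ + r + 1))) with hS'
  have hqp : ∀ i, q i = p (i + 1) := fun i => rfl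
  have hS'sub : S' ⊆ Im := by
    intro j hj
    obtain ⟨r, hr, rfl⟩ := Finset.mem_image.1 hj
    apply Finset.mem_image.2
    exact ⟨i₀ + r, Finset.mem_range.2 (by have := Finset.mem_range.1 hr; omega), rfl⟩
  have hS'card : S'.card = d₀ := by
    rw [hS', Finset.card_image_of_injOn, Finset.card_range]
    intro r hr r' hr' he
    exact hcdinj r r' (Finset.mem_range.1 hr) (Finset.mem_range.1 hr') he
  have hsum : ∑ j ∈ Im, ((Finset.range ℓ).filter (fun i => codeS (p i) (q i) = j)).card = ℓ :=
    card_fiber_sum p q ℓ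
  have hle : ∑ j ∈ S', ((Finset.range ℓ).filter (fun i => codeS (p i) (q i) = j)).card ≤ ℓ := by
    exact le_trans (Finset.sum_le_sum_of_subset hS'sub) (le_of_eq hsum)
  have h2d : 2 * d₀ ≤ ∑ j ∈ S', ((Finset.range ℓ).filter (fun i => codeS (p i) (q i) = j)).card := by
    have : ∀ j ∈ S', 2 ≤ ((Finset.range ℓ).filter (fun i => codeS (p i) (q i) = j)).card := by
      intro j hj
      obtain ⟨r, hr, rfl⟩ := Finset.mem_image.1 hj
      apply fiber_two (hvan _)
      apply Finset.mem_filter.2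
      exact ⟨Finset.mem_range.2 (by have := Finset.mem_range.1 hr; omega), rfl⟩
    calc 2 * d₀ = ∑ _j ∈ S', 2 := by
          rw [Finset.sum_const, hS'card, smul_eq_mul, mul_comm]
      _ ≤ _ := Finset.sum_le_sum this
  omega

end LiftGirth
section Step

lemma Efun_fst {m M N : ℕ} [NeZero m] [NeZero N] (f : ZMod m → ZMod m) (t : ℕ) :
    (Efun M N f t).1 = f (t : ZMod m) := rfl

lemma Efun_val_succ {m M N m' : ℕ} [NeZero m] [NeZero N] [NeZero m'] (hm' : m' = m * N)
    (f : ZMod m → ZMod m) (x : ZMod m') :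
    Efun M N f ((x + 1).val) = Efun M N f (x.val + 1) := by
  have h1 : (x + 1).val = (x.val + 1) % m' := by
    conv_lhs => rw [show x = ((x.val : ℕ) : ZMod m') from (ZMod.natCast_zmod_val x).symm]
    rw [show ((x.val : ℕ) : ZMod m') + 1 = ((x.val + 1 : ℕ) : ZMod m') by push_cast; ring]
    exact ZMod.val_natCast _ _
  rcases Nat.lt_or_ge (x.val + 1) m' with hlt | hge
  · rw [h1, Nat.mod_eq_of_lt hlt]
  · have hx := ZMod.val_lt x
    have h2 : x.val + 1 = m' := by omega
    rw [h1, h2, Nat.mod_self, hm']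
    exact (Efun_period f).symm

lemma step {γ : ℕ} (hγ : 3 ≤ γ) (B : GoodP γ) : GoodP (2 * γ) := by
  classical
  obtain ⟨m, h, hm3, hbij, disj, girth⟩ := B
  haveI : NeZero m := ⟨by omega⟩
  set M := 2 * γ + 2 with hMdef
  have hM2 : 2 ≤ M := by omega
  obtain ⟨N, hNge, hNp⟩ := Nat.exists_infinite_primes (M ^ (m * m) + 1)
  have hN : M ^ (m * m) < N := by omega
  haveI : NeZero N := ⟨hNp.pos.ne'⟩
  have hedgeA : ∀ t : ZMod m, (Gr m h).Adj t (t + 1) := by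
    intro t
    exact ⟨Ne.symm (add_one_ne hm3 t), Or.inl ⟨t, rfl⟩⟩
  have hedgeB : ∀ t : ZMod m, (Gr m h).Adj (h t) (h (t + 1)) := by
    intro t
    exact ⟨cpair_ne_diag hm3 hbij.injective t, Or.inr ⟨t, rfl⟩⟩
  have htauA : Sfun M N (id : ZMod m → ZMod m) m ≠ 0 :=
    tau_ne hm3 Function.injective_id hM2 hN
  have htauB : Sfun M N h m ≠ 0 := tau_ne hm3 hbij.injective hM2 hN
  set m' := m * N with hm'def
  haveI : NeZero m' := ⟨Nat.mul_ne_zero (by omega) hNp.pos.ne'⟩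
  have hm'3 : 3 ≤ m' := le_trans hm3 (Nat.le_mul_of_pos_right _ hNp.pos)
  set Ψ : ZMod m' → ZMod m × ZMod N := fun x => Efun M N id x.val with hΨdef
  have hΨinj : Function.Injective Ψ := by
    intro x y hxy
    exact ZMod.val_injective m'
      (Efun_inj hm3 Function.injective_id htauA hNp (ZMod.val_lt x) (ZMod.val_lt y) hxy)
  have hΨbij : Function.Bijective Ψ := by
    rw [Fintype.bijective_iff_injective_and_card]
    refine ⟨hΨinj, ?_⟩
    rw [ZMod.card, Fintype.card_prod, ZMod.card, ZMod.card]
  set Φ := Equiv.ofBijective Ψ hΨbij with hΦdef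
  set EB : ZMod m' → ZMod m × ZMod N := fun x => Efun M N h x.val with hEBdef
  have hEBinj : Function.Injective EB := by
    intro x y hxy
    exact ZMod.val_injective m'
      (Efun_inj hm3 hbij.injective htauB hNp (ZMod.val_lt x) (ZMod.val_lt y) hxy)
  have hEBbij : Function.Bijective EB := by
    rw [Fintype.bijective_iff_injective_and_card]
    refine ⟨hEBinj, ?_⟩
    rw [ZMod.card, Fintype.card_prod, ZMod.card, ZMod.card]
  set h' : ZMod m' → ZMod m' := fun x => Φ.symm (EB x) with hh'def
  have hh'bij : Function.Bijective h' := Φ.symm.bijective.comp hEBbij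
  have hΨh' : ∀ x, Ψ (h' x) = EB x := fun x => Φ.apply_symm_apply (EB x)
  have hΨsucc : ∀ x : ZMod m', Ψ (x + 1) = Efun M N (id : ZMod m → ZMod m) (x.val + 1) :=
    fun x => Efun_val_succ hm'def id x
  have hEBsucc : ∀ x : ZMod m', EB (x + 1) = Efun M N h (x.val + 1) :=
    fun x => Efun_val_succ hm'def h x
  have htrans : ∀ x y : ZMod m', (Gr m' h').Adj x y → LiftAdj h M N (Ψ x) (Ψ y) := by
    rintro x y ⟨hxy, hpair | hpair⟩
    · obtain ⟨a, ha⟩ := hpair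
      rw [Sym2.eq_iff] at ha
      simp only [id_eq] at ha
      rcases ha with ⟨h1, h2⟩ | ⟨h1, h2⟩
      · rw [h1, h2, hΨsucc]
        exact Efun_liftAdj (fun t => hedgeA t) a.val
      · rw [h1, h2, hΨsucc]
        exact (Efun_liftAdj (fun t => hedgeA t) a.val).symm
    · obtain ⟨a, ha⟩ := hpair
      rw [Sym2.eq_iff] at ha
      rcases ha with ⟨h1, h2⟩ | ⟨h1, h2⟩
      · rw [h1, h2, hΨh', hΨh', hEBsucc]
        exact Efun_liftAdj hedgeB a.val
      · rw [h1, h2, hΨh', hΨh', hEBsucc]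
        exact (Efun_liftAdj hedgeB a.val).symm
  refine ⟨m', h', hm'3, hh'bij, ?_, ?_⟩
  · rintro e ⟨a, rfl⟩ ⟨b, hb⟩
    have h1 : s(Ψ a, Ψ (a + 1)) = s(Ψ (h' b), Ψ (h' (b + 1))) := by
      have := congrArg (Sym2.map Ψ) hb
      simpa [Sym2.map_pair_eq] using this
    rw [hΨh', hΨh', hΨsucc, hEBsucc] at h1
    have h2 := congrArg (Sym2.map Prod.fst) h1
    rw [Sym2.map_pair_eq, Sym2.map_pair_eq] at h2
    simp only [Efun_fst] at h2
    have hcast : ∀ t : ℕ, ((t + 1 : ℕ) : ZMod m) = (t : ZMod m) + 1 := by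
      intro t; push_cast; ring
    rw [hcast, hcast] at h2
    refine disj (s((a.val : ZMod m), (a.val : ZMod m) + 1)) ⟨(a.val : ZMod m), rfl⟩ ?_
    exact ⟨(b.val : ZMod m), h2⟩
  · intro ℓ u h3 hadj hclose hinj
    exact lift_girth hγ girth (by omega) hN h3
      (fun t ht => htrans _ _ (hadj t ht))
      (congrArg Ψ hclose)
      (fun i j hi hj he => hinj i j hi hj (hΨinj he))

end Step
section Base

lemma base : GoodP 3 := by
  refine ⟨5, fun t => 2 * t, by norm_num, by decide, ?_, ?_⟩
  · rintro e ⟨a, ha⟩ ⟨b, hb⟩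
    rw [ha] at hb
    have key : ∀ a b : ZMod 5, s((id a : ZMod 5), id (a + 1)) ≠ s(2 * b, 2 * (b + 1)) := by decide
    exact key a b hb
  · intro ℓ u h3 _ _ _
    exact h3

lemma good_pow : ∀ k : ℕ, GoodP (3 * 2 ^ k) := by
  intro k
  induction k with
  | zero => simpa using base
  | succ k ih =>
      have h3 : 3 ≤ 3 * 2 ^ k := Nat.le_mul_of_pos_right _ (Nat.pow_pos (by norm_num))
      have := step h3 ih
      rwa [show 2 * (3 * 2 ^ k) = 3 * 2 ^ (k + 1) by ring] at this

end Base

section Walks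

open SimpleGraph

variable {V : Type*} (G : SimpleGraph V)

def fnWalk (f : ℕ → V) : (k : ℕ) → (∀ i, i < k → G.Adj (f i) (f (i + 1))) → G.Walk (f 0) (f k)
  | 0, _ => Walk.nil
  | (k + 1), hadj =>
      Walk.cons (hadj 0 (Nat.succ_pos k))
        (fnWalk (fun i => f (i + 1)) k (fun i hi => hadj (i + 1) (by omega)))

lemma fnWalk_support (f : ℕ → V) (k : ℕ) (hadj : ∀ i, i < k → G.Adj (f i) (f (i + 1))) :
    (fnWalk G f k hadj).support = (List.range (k + 1)).map f := by
  induction k generalizing f with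
  | zero => simp [fnWalk, List.range_succ]
  | succ k ih =>
      rw [fnWalk, Walk.support_cons, ih]
      rw [List.range_succ_eq_map (n := k + 1), List.map_cons, List.map_map]
      rfl

lemma fnWalk_edges (f : ℕ → V) (k : ℕ) (hadj : ∀ i, i < k → G.Adj (f i) (f (i + 1))) :
    (fnWalk G f k hadj).edges = (List.range k).map (fun i => s(f i, f (i + 1))) := by
  induction k generalizing f with
  | zero => simp [fnWalk]
  | succ k ih =>
      rw [fnWalk, Walk.edges_cons, ih]
      rw [List.range_succ_eq_map (n := k), List.map_cons, List.map_map]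
      rfl

lemma fnWalk_length (f : ℕ → V) (k : ℕ) (hadj : ∀ i, i < k → G.Adj (f i) (f (i + 1))) :
    (fnWalk G f k hadj).length = k := by
  induction k generalizing f with
  | zero => simp [fnWalk]
  | succ k ih =>
      rw [fnWalk, Walk.length_cons, ih]

variable {G}

lemma cyc_inj {f : ℕ → V} {k : ℕ} (hclose : f k = f 0)
    (hinj : ∀ i j, i < k → j < k → f i = f j → i = j) :
    ∀ i j, i ≤ k → j ≤ k → f i = f j →
      i = j ∨ (i = 0 ∧ j = k) ∨ (i = k ∧ j = 0) := by
  intro i j hi hj he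
  rcases Nat.lt_or_ge i k with h1 | h1 <;> rcases Nat.lt_or_ge j k with h2 | h2
  · exact Or.inl (hinj i j h1 h2 he)
  · have hjk : j = k := by omega
    subst hjk
    rw [hclose] at he
    have := hinj i 0 h1 (by omega) he
    omega
  · have hik : i = k := by omega
    subst hik
    rw [hclose] at he
    have := hinj 0 j (by omega) h2 he
    omega
  · omega

lemma pair_distinct {f : ℕ → V} {k : ℕ} (hk : 3 ≤ k) (hclose : f k = f 0)
    (hinj : ∀ i j, i < k → j < k → f i = f j → i = j)
    (hne : ∀ i, i < k → f i ≠ f (i + 1)) :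
    ∀ i j, i < k → j < k → s(f i, f (i + 1)) = s(f j, f (j + 1)) → i = j := by
  intro i j hi hj he
  rw [Sym2.eq_iff] at he
  rcases he with ⟨e1, _⟩ | ⟨e1, e2⟩
  · exact hinj i j hi hj e1
  · have k1 := cyc_inj hclose hinj i (j + 1) (by omega) (by omega) e1
    have k2 := cyc_inj hclose hinj (i + 1) j (by omega) (by omega) e2
    omega

lemma fnWalk_isCycle (f : ℕ → V) (k : ℕ) (hadj : ∀ i, i < k → G.Adj (f i) (f (i + 1)))
    (hk : 3 ≤ k) {v : V} (hu : f 0 = v) (hv : f k = v)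
    (hinj : ∀ i j, i < k → j < k → f i = f j → i = j) :
    ((fnWalk G f k hadj).copy hu hv).IsCycle := by
  have hclose : f k = f 0 := hv.trans hu.symm
  have hne : ∀ i, i < k → f i ≠ f (i + 1) := fun i hi => (hadj i hi).ne
  rw [Walk.isCycle_def]
  refine ⟨⟨?_⟩, ?_, ?_⟩
  · -- edges nodup
    rw [Walk.edges_copy, fnWalk_edges]
    apply List.Nodup.map_on ?_ (List.nodup_range (n := k))
    intro i hi j hj he
    exact pair_distinct hk hclose hinj hne i j (List.mem_range.1 hi) (List.mem_range.1 hj) he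
  · -- not nil
    intro hnil
    have := congrArg Walk.length hnil
    rw [Walk.length_copy, fnWalk_length] at this
    simp at this
    omega
  · -- support tail nodup
    rw [Walk.support_copy, fnWalk_support, List.range_succ_eq_map, List.map_cons, List.tail_cons,
      List.map_map]
    apply List.Nodup.map_on ?_ (List.nodup_range (n := k))
    intro i hi j hj he
    have := cyc_inj hclose hinj (i + 1) (j + 1) (by
      have := List.mem_range.1 hi; omega) (by have := List.mem_range.1 hj; omega) he
    omega

lemma fnWalk_isHamiltonianCycle [Fintype V] [DecidableEq V]
    (f : ℕ → V) (k : ℕ) (hadj : ∀ i, i < k → G.Adj (f i) (f (i + 1)))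
    (hk : 3 ≤ k) (hcard : Fintype.card V = k) {v : V} (hu : f 0 = v) (hv : f k = v)
    (hinj : ∀ i j, i < k → j < k → f i = f j → i = j) :
    ((fnWalk G f k hadj).copy hu hv).IsHamiltonianCycle := by
  have hclose : f k = f 0 := hv.trans hu.symm
  rw [Walk.isHamiltonianCycle_iff_isCycle_and_support_count_tail_eq_one]
  refine ⟨fnWalk_isCycle f k hadj hk hu hv hinj, ?_⟩
  intro a
  rw [Walk.support_copy, fnWalk_support, List.range_succ_eq_map, List.map_cons, List.tail_cons,
    List.map_map]
  have hnodup : ((List.range k).map (f ∘ Nat.succ)).Nodup := by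
    apply List.Nodup.map_on ?_ (List.nodup_range (n := k))
    intro i hi j hj he
    have := cyc_inj hclose hinj (i + 1) (j + 1) (by
      have := List.mem_range.1 hi; omega) (by have := List.mem_range.1 hj; omega) he
    omega
  have hmem : a ∈ (List.range k).map (f ∘ Nat.succ) := by
    have hkpos : 0 < k := by omega
    set φ : Fin k → V := fun i => f (i.val + 1) with hφ
    have hφinj : Function.Injective φ := by
      intro i j he
      have := cyc_inj hclose hinj (i.val + 1) (j.val + 1) (by omega) (by omega) he
      have hi := i.isLt; have hj := j.isLt
      exact Fin.ext (by omega)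
    have hφbij : Function.Bijective φ := by
      rw [Fintype.bijective_iff_injective_and_card]
      exact ⟨hφinj, by rw [Fintype.card_fin, hcard]⟩
    obtain ⟨i, hi⟩ := hφbij.surjective a
    rw [List.mem_map]
    exact ⟨i.val, List.mem_range.2 i.isLt, hi⟩
  exact List.count_eq_one_of_mem hnodup hmem

end Walks
section Extract

open SimpleGraph

variable {V : Type*} {G : SimpleGraph V}

lemma nodup_getElem_inj {l : List V} (h : l.Nodup) {i j : ℕ}
    (hi : i < l.length) (hj : j < l.length) (he : l[i] = l[j]) : i = j := by
  have h2 : (⟨i, hi⟩ : Fin l.length) = ⟨j, hj⟩ :=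
    List.nodup_iff_injective_getElem.mp h
      (show (fun t : Fin l.length => l[t.val]) ⟨i, hi⟩
          = (fun t : Fin l.length => l[t.val]) ⟨j, hj⟩ from he)
  simpa using congrArg Fin.val h2

lemma cycle_to_fn {a : V} (w : G.Walk a a) (hw : w.IsCycle) :
    ∃ u : ℕ → V, (∀ t, t < w.length → G.Adj (u t) (u (t + 1))) ∧ u w.length = u 0 ∧
      (∀ i j, i < w.length → j < w.length → u i = u j → i = j) := by
  classical
  have hlen : w.support.length = w.length + 1 := Walk.length_support w
  have hLne : w.support ≠ [] := w.support_ne_nil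
  have htlen : w.support.tail.length = w.length := by
    rw [List.length_tail, hlen]
    omega
  have hval : ∀ (t : ℕ) (ht : t < w.support.length), w.support.getD t a = w.support[t] :=
    fun t ht => List.getD_eq_getElem _ _ ht
  have h0 : w.support.getD 0 a = a := by
    rw [Walk.support_eq_cons]
    exact List.getD_cons_zero
  have hle : w.support.getD w.length a = a := by
    rw [hval _ (by omega)]
    have h10 : w.support[w.length]'(by omega) = w.support.getLast hLne := by
      rw [List.getLast_eq_getElem]
      congr 1
      omega
    rw [h10]
    exact Walk.getLast_support w
  have htail : w.support.tail.Nodup := hw.support_nodup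
  have hinj1 : ∀ (s t : ℕ), 1 ≤ s → 1 ≤ t → s < w.length + 1 → t < w.length + 1 →
      w.support.getD s a = w.support.getD t a → s = t := by
    intro s t hs1 ht1 hs ht he
    rw [hval _ (by omega), hval _ (by omega)] at he
    have e1 : w.support.tail[s-1]'(by omega) = w.support[s]'(by omega) := by
      rw [List.getElem_tail]
      congr 1
      omega
    have e2 : w.support.tail[t-1]'(by omega) = w.support[t]'(by omega) := by
      rw [List.getElem_tail]
      congr 1
      omega
    have := nodup_getElem_inj htail (i := s - 1) (j := t - 1) (by omega) (by omega)
      (by rw [e1, e2]; exact he)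
    omega
  have hchain := List.isChain_iff_getElem.mp (Walk.isChain_adj_support w)
  refine ⟨fun t => w.support.getD t a, ?_, ?_, ?_⟩
  · intro t ht
    show G.Adj (w.support.getD t a) (w.support.getD (t + 1) a)
    rw [hval _ (by omega), hval _ (by omega)]
    have := hchain t (by omega)
    simpa [List.get_eq_getElem] using this
  · show w.support.getD w.length a = w.support.getD 0 a
    rw [h0, hle]
  · intro i j hi hj he
    simp only at he
    rcases Nat.eq_zero_or_pos i with h1 | h1 <;> rcases Nat.eq_zero_or_pos j with h2 | h2
    · omega
    · exfalso
      subst h1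
      rw [h0] at he
      have := hinj1 j w.length (by omega) (by omega) (by omega) (by omega)
        (by rw [hle]; exact he.symm)
      omega
    · exfalso
      subst h2
      rw [h0] at he
      have := hinj1 i w.length (by omega) (by omega) (by omega) (by omega)
        (by rw [hle]; exact he)
      omega
    · exact hinj1 i j h1 h2 (by omega) (by omega) he

end Extract
section Final

open SimpleGraph

lemma cpairs_shift {m : ℕ} (h : ZMod m → ZMod m) (t₀ : ZMod m) :
    cpairs m (fun t => h (t + t₀)) = cpairs m h := by
  ext e
  constructor
  · rintro ⟨t, rfl⟩
    refine ⟨t + t₀, ?_⟩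
    show s(h (t + t₀), h (t + 1 + t₀)) = s(h (t + t₀), h (t + t₀ + 1))
    rw [show t + 1 + t₀ = t + t₀ + 1 by ring]
  · rintro ⟨t, rfl⟩
    refine ⟨t - t₀, ?_⟩
    show s(h t, h (t + 1)) = s(h (t - t₀ + t₀), h (t - t₀ + 1 + t₀))
    rw [show t - t₀ + t₀ = t by ring, show t - t₀ + 1 + t₀ = t + 1 by ring]

lemma Gr_congr {m : ℕ} {h1 h2 : ZMod m → ZMod m} (he : cpairs m h1 = cpairs m h2) :
    Gr m h1 = Gr m h2 := by
  ext x y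
  show x ≠ y ∧ (s(x, y) ∈ cpairs m id ∨ s(x, y) ∈ cpairs m h1) ↔
    x ≠ y ∧ (s(x, y) ∈ cpairs m id ∨ s(x, y) ∈ cpairs m h2)
  rw [he]

lemma deg4 {m : ℕ} [NeZero m] (hm3 : 3 ≤ m) (h : ZMod m → ZMod m)
    (hbij : Function.Bijective h) (disj : ∀ e ∈ cpairs m id, e ∉ cpairs m h)
    (w : ZMod m) : ((Gr m h).neighborSet w).ncard = 4 := by
  classical
  obtain ⟨t₀, ht₀⟩ := hbij.surjective w
  have hinj := hbij.injective
  have hset : (Gr m h).neighborSet w = {w + 1, w - 1, h (t₀ + 1), h (t₀ - 1)} := by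
    ext y
    rw [mem_neighborSet]
    constructor
    · rintro ⟨hne, hp | hp⟩
      · obtain ⟨t, ht⟩ := hp
        rw [Sym2.eq_iff] at ht
        simp only [id_eq] at ht
        rcases ht with ⟨e1, e2⟩ | ⟨e1, e2⟩
        · left; rw [e2, ← e1]
        · right; left; rw [e2, e1]; ring
      · obtain ⟨t, ht⟩ := hp
        rw [Sym2.eq_iff] at ht
        rcases ht with ⟨e1, e2⟩ | ⟨e1, e2⟩
        · right; right; left
          have htt : t = t₀ := hinj (e1.symm.trans ht₀.symm)
          rw [e2, htt]
        · right; right; right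
          have htt : t + 1 = t₀ := hinj (e1.symm.trans ht₀.symm)
          have h5 : t = t₀ - 1 := by rw [← htt]; ring
          rw [e2, h5]
          exact rfl
    · intro hy
      rcases hy with hy | hy | hy | hy
      · rw [hy]
        exact ⟨Ne.symm (add_one_ne hm3 w), Or.inl ⟨w, rfl⟩⟩
      · rw [hy]
        refine ⟨?_, Or.inl ⟨w - 1, by
          simp only [id_eq]
          rw [show w - 1 + 1 = w by ring, Sym2.eq_swap]⟩⟩
        intro he
        apply add_one_ne hm3 (w - 1)
        rw [show w - 1 + 1 = w by ring]
        exact he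
      · rw [hy]
        refine ⟨?_, Or.inr ⟨t₀, by rw [ht₀]⟩⟩
        intro he
        apply cpair_ne_diag hm3 hinj t₀
        rw [ht₀, he]
      · rw [hy]
        refine ⟨?_, Or.inr ⟨t₀ - 1, by
          rw [show t₀ - 1 + 1 = t₀ by ring, ht₀, Sym2.eq_swap]⟩⟩
        intro he
        apply cpair_ne_diag hm3 hinj (t₀ - 1)
        rw [show t₀ - 1 + 1 = t₀ by ring, ht₀, he]
  have m1 : s(w, w + 1) ∈ cpairs m id := ⟨w, by simp only [id_eq]⟩
  have m2 : s(w, w - 1) ∈ cpairs m id :=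
    ⟨w - 1, by
      simp only [id_eq]
      rw [show w - 1 + 1 = w by ring, Sym2.eq_swap]⟩
  have m3 : s(w, h (t₀ + 1)) ∈ cpairs m h := ⟨t₀, by rw [ht₀]⟩
  have m4 : s(w, h (t₀ - 1)) ∈ cpairs m h :=
    ⟨t₀ - 1, by rw [show t₀ - 1 + 1 = t₀ by ring, ht₀, Sym2.eq_swap]⟩
  have d1 : w + 1 ≠ w - 1 := by
    intro he
    apply add_two_ne hm3 (w - 1)
    rw [show w - 1 + 2 = w + 1 by ring, he]
  have d2 : h (t₀ + 1) ≠ h (t₀ - 1) := by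
    intro he
    have h2 := hinj he
    apply add_two_ne hm3 (t₀ - 1)
    rw [show t₀ - 1 + 2 = t₀ + 1 by ring, h2]
  have c13 : w + 1 ≠ h (t₀ + 1) := fun he => disj _ m1 (he ▸ m3)
  have c14 : w + 1 ≠ h (t₀ - 1) := fun he => disj _ m1 (he ▸ m4)
  have c23 : w - 1 ≠ h (t₀ + 1) := fun he => disj _ m2 (he ▸ m3)
  have c24 : w - 1 ≠ h (t₀ - 1) := fun he => disj _ m2 (he ▸ m4)
  rw [hset]
  rw [Set.ncard_insert_of_notMem (by simp [d1, c13, c14]) (Set.toFinite _),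
    Set.ncard_insert_of_notMem (by simp [c23, c24]) (Set.toFinite _),
    Set.ncard_insert_of_notMem (by simp [d2]) (Set.toFinite _),
    Set.ncard_singleton]

end Final

open SimpleGraph in
theorem main_thm (g : ℕ) (hg : 4 ≤ g) :
    ∃ (n : ℕ) (G : SimpleGraph (Fin n)) (v : Fin n) (c₁ c₂ : G.Walk v v),
      c₁.IsHamiltonianCycle ∧ c₂.IsHamiltonianCycle ∧
      (∀ e ∈ c₁.edges, e ∉ c₂.edges) ∧
      (∀ e, e ∈ G.edgeSet ↔ e ∈ c₁.edges ∨ e ∈ c₂.edges) ∧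
      (∀ w : Fin n, (G.neighborSet w).ncard = 4) ∧
      (g : ℕ∞) ≤ G.egirth := by
  classical
  have hγ : g ≤ 3 * 2 ^ g := le_trans (le_of_lt (Nat.lt_two_pow_self (n := g))) (by omega)
  obtain ⟨m, h₀, hm3, hbij₀, disj₀, girth₀⟩ := good_pow g
  haveI : NeZero m := ⟨by omega⟩
  -- normalize so that the second cycle passes through 0
  set t₀ := (Equiv.ofBijective h₀ hbij₀).symm 0 with ht₀def
  set h : ZMod m → ZMod m := fun t => h₀ (t + t₀) with hdef
  have hbij : Function.Bijective h := hbij₀.comp (Equiv.addRight t₀).bijective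
  have hcp : cpairs m h = cpairs m h₀ := cpairs_shift h₀ t₀
  have hGr : Gr m h = Gr m h₀ := Gr_congr hcp
  have disj : ∀ e ∈ cpairs m id, e ∉ cpairs m h := by
    rw [hcp]; exact disj₀
  have girth : ∀ (ℓ : ℕ) (u : ℕ → ZMod m), 3 ≤ ℓ →
      (∀ t, t < ℓ → (Gr m h).Adj (u t) (u (t + 1))) → u ℓ = u 0 →
      (∀ i j, i < ℓ → j < ℓ → u i = u j → i = j) → 3 * 2 ^ g ≤ ℓ := by
    rw [hGr]; exact girth₀
  have h00 : h 0 = 0 := by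
    show h₀ (0 + t₀) = 0
    rw [zero_add]
    exact (Equiv.ofBijective h₀ hbij₀).apply_symm_apply 0
  -- the two enumerations
  set f₁ : ℕ → ZMod m := fun i => (i : ZMod m) with hf₁
  set f₂ : ℕ → ZMod m := fun i => h ((i : ZMod m)) with hf₂
  have hadj₁ : ∀ i, i < m → (Gr m h).Adj (f₁ i) (f₁ (i + 1)) := by
    intro i _
    show (Gr m h).Adj ((i : ZMod m)) (((i + 1 : ℕ) : ZMod m))
    rw [show ((i + 1 : ℕ) : ZMod m) = (i : ZMod m) + 1 by push_cast; ring]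
    exact ⟨Ne.symm (add_one_ne hm3 _), Or.inl ⟨(i : ZMod m), rfl⟩⟩
  have hadj₂ : ∀ i, i < m → (Gr m h).Adj (f₂ i) (f₂ (i + 1)) := by
    intro i _
    show (Gr m h).Adj (h ((i : ZMod m))) (h (((i + 1 : ℕ) : ZMod m)))
    rw [show ((i + 1 : ℕ) : ZMod m) = (i : ZMod m) + 1 by push_cast; ring]
    exact ⟨cpair_ne_diag hm3 hbij.injective _, Or.inr ⟨(i : ZMod m), rfl⟩⟩
  have hinj₁ : ∀ i j, i < m → j < m → f₁ i = f₁ j → i = j := by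
    intro i j hi hj he
    have he' : ((i : ℕ) : ZMod m) = ((j : ℕ) : ZMod m) := he
    have h5 : ((i : ZMod m)).val = ((j : ZMod m)).val := by rw [he']
    rwa [ZMod.val_natCast_of_lt hi, ZMod.val_natCast_of_lt hj] at h5
  have hinj₂ : ∀ i j, i < m → j < m → f₂ i = f₂ j → i = j := by
    intro i j hi hj he
    exact hinj₁ i j hi hj (hbij.injective he)
  have hu₁ : f₁ 0 = (0 : ZMod m) := by simp [hf₁]
  have hv₁ : f₁ m = (0 : ZMod m) := ZMod.natCast_self m
  have hu₂ : f₂ 0 = (0 : ZMod m) := by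
    show h ((0 : ℕ) : ZMod m) = 0
    rw [Nat.cast_zero, h00]
  have hv₂ : f₂ m = (0 : ZMod m) := by
    show h ((m : ℕ) : ZMod m) = 0
    rw [ZMod.natCast_self, h00]
  have hcardm : Fintype.card (ZMod m) = m := ZMod.card m
  set c₁ := (fnWalk (Gr m h) f₁ m hadj₁).copy hu₁ hv₁ with hc₁def
  set c₂ := (fnWalk (Gr m h) f₂ m hadj₂).copy hu₂ hv₂ with hc₂def
  have hham₁ : c₁.IsHamiltonianCycle :=
    fnWalk_isHamiltonianCycle f₁ m hadj₁ hm3 hcardm hu₁ hv₁ hinj₁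
  have hham₂ : c₂.IsHamiltonianCycle :=
    fnWalk_isHamiltonianCycle f₂ m hadj₂ hm3 hcardm hu₂ hv₂ hinj₂
  have hc₁e : ∀ e, e ∈ c₁.edges ↔ e ∈ cpairs m id := by
    intro e
    rw [hc₁def, Walk.edges_copy, fnWalk_edges]
    constructor
    · intro hmem
      obtain ⟨i, _, rfl⟩ := List.mem_map.1 hmem
      exact ⟨(i : ZMod m), by
        show s(f₁ i, f₁ (i + 1)) = s(id ((i : ZMod m)), id ((i : ZMod m) + 1))
        simp only [id_eq]
        show s(((i : ℕ) : ZMod m), ((i + 1 : ℕ) : ZMod m)) = _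
        rw [show ((i + 1 : ℕ) : ZMod m) = (i : ZMod m) + 1 by push_cast; ring]⟩
    · rintro ⟨t, rfl⟩
      rw [List.mem_map]
      refine ⟨t.val, List.mem_range.2 (ZMod.val_lt t), ?_⟩
      show s(((t.val : ℕ) : ZMod m), ((t.val + 1 : ℕ) : ZMod m)) = s(id t, id (t + 1))
      simp only [id_eq]
      rw [show ((t.val + 1 : ℕ) : ZMod m) = ((t.val : ℕ) : ZMod m) + 1 by push_cast; ring,
        ZMod.natCast_zmod_val]
  have hc₂e : ∀ e, e ∈ c₂.edges ↔ e ∈ cpairs m h := by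
    intro e
    rw [hc₂def, Walk.edges_copy, fnWalk_edges]
    constructor
    · intro hmem
      obtain ⟨i, _, rfl⟩ := List.mem_map.1 hmem
      exact ⟨(i : ZMod m), by
        show s(h ((i : ℕ) : ZMod m), h ((i + 1 : ℕ) : ZMod m)) = _
        rw [show ((i + 1 : ℕ) : ZMod m) = (i : ZMod m) + 1 by push_cast; ring]⟩
    · rintro ⟨t, rfl⟩
      rw [List.mem_map]
      refine ⟨t.val, List.mem_range.2 (ZMod.val_lt t), ?_⟩
      show s(h ((t.val : ℕ) : ZMod m), h ((t.val + 1 : ℕ) : ZMod m)) = s(h t, h (t + 1))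
      rw [show ((t.val + 1 : ℕ) : ZMod m) = ((t.val : ℕ) : ZMod m) + 1 by push_cast; ring,
        ZMod.natCast_zmod_val]
  have hdisj : ∀ e ∈ c₁.edges, e ∉ c₂.edges := by
    intro e he1 he2
    exact disj e ((hc₁e e).1 he1) ((hc₂e e).1 he2)
  have hunion : ∀ e, e ∈ (Gr m h).edgeSet ↔ e ∈ c₁.edges ∨ e ∈ c₂.edges := by
    intro e
    constructor
    · intro hmem
      induction e with
      | h x y =>
          rw [mem_edgeSet] at hmem
          obtain ⟨_, hp | hp⟩ := hmem
          · exact Or.inl ((hc₁e _).2 hp)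
          · exact Or.inr ((hc₂e _).2 hp)
    · rintro (he | he)
      · exact c₁.edges_subset_edgeSet he
      · exact c₂.edges_subset_edgeSet he
  have hdeg : ∀ w : ZMod m, ((Gr m h).neighborSet w).ncard = 4 :=
    deg4 hm3 h hbij disj
  have hgirth : (g : ℕ∞) ≤ (Gr m h).egirth := by
    rw [le_egirth]
    intro a c hc
    obtain ⟨u, hadj, hclose, hinj⟩ := cycle_to_fn c hc
    have h3 : 3 ≤ c.length := hc.three_le_length
    have hbound := girth c.length u h3 hadj hclose hinj
    exact_mod_cast Nat.cast_le.2 (le_trans hγ hbound)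
  obtain ⟨k, rfl⟩ : ∃ k, m = k + 1 := ⟨m - 1, by omega⟩
  exact ⟨k + 1, Gr (k + 1) h, 0, c₁, c₂, hham₁, hham₂, hdisj, hunion, hdeg, hgirth⟩
end TwoHamAux


/-- For every integer `g ≥ 4` there exists a finite 4-regular simple undirected
graph whose girth is at least `g` and whose edge set is the union of two edge-disjoint
Hamiltonian cycles. -/
theorem exists_four_regular_high_girth_two_hamiltonian_cycles (g : ℕ) (hg : 4 ≤ g) :
    ∃ (n : ℕ) (G : SimpleGraph (Fin n)) (v : Fin n) (c₁ c₂ : G.Walk v v),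
      c₁.IsHamiltonianCycle ∧ c₂.IsHamiltonianCycle ∧
      (∀ e ∈ c₁.edges, e ∉ c₂.edges) ∧
      (∀ e, e ∈ G.edgeSet ↔ e ∈ c₁.edges ∨ e ∈ c₂.edges) ∧
      (∀ w : Fin n, (G.neighborSet w).ncard = 4) ∧
      (g : ℕ∞) ≤ G.egirth := by
  exact TwoHamAux.main_thm g hg
end

section
/- In any connector path, for every s ∈ {17,18,19,20} and every t ∈ {1,2,5,7} there is no temporal path from s to t. -/
/-- The vertex sequence of the red path of a connector path: `1, 2, …, 20`. -/
def redList : List ℕ := (List.range 20).map (· + 1)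

/-- The vertex sequence of the blue path of a connector path. -/
def blueList : List ℕ := [1, 5, 9, 13, 2, 7, 11, 19, 14, 6, 17, 10, 3, 15, 8, 18, 4, 12, 16, 20]

/-- `T` is a connector path: a happy temporal graph on vertex set `{1,…,20}` (as a subset of
`ℕ`) whose edge set is the disjoint union of the red path and the blue path, where along each
path the labels increase consecutively (by exactly one from one edge to the next), and every
label of a blue edge is strictly larger than every label of a red edge. -/
def IsConnectorPath (T : TemporalGraph ℕ) : Prop :=
  T.Happy ∧
  ∃ r0 b0 : ℕ, 0 < r0 ∧ r0 + 19 ≤ b0 ∧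
    (∀ u v : ℕ, T.G.Adj u v ↔
      ((∃ i < 19, s(u, v) = s(redList.getD i 0, redList.getD (i + 1) 0)) ∨
       (∃ j < 19, s(u, v) = s(blueList.getD j 0, blueList.getD (j + 1) 0)))) ∧
    (∀ i < 19, T.lab s(redList.getD i 0, redList.getD (i + 1) 0) = {r0 + i}) ∧
    (∀ j < 19, T.lab s(blueList.getD j 0, blueList.getD (j + 1) 0) = {b0 + j})

/-- The endpoints of the `k`-th edge of a connector path (red edges for `k < 19`,
blue edges for `19 ≤ k < 38`). -/
def cpE (k : ℕ) : ℕ × ℕ :=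
  if k < 19 then (k + 1, k + 2)
  else (blueList.getD (k - 19) 0, blueList.getD (k - 18) 0)

/-- The label of the `k`-th edge of a connector path with offsets `r0`, `b0`. -/
def cpLab (r0 b0 k : ℕ) : ℕ :=
  if k < 19 then r0 + k else b0 + (k - 19)

/-- Abstract bounded reachability: from `u`, using edges with strictly increasing
indices `≥ k`, one can reach `v` in at most `fuel` steps. -/
def areach : ℕ → ℕ → ℕ → ℕ → Bool
  | 0, _, u, v => u == v
  | fuel+1, k, u, v => u == v ||
     (List.range 38).any (fun k' =>
        decide (k ≤ k') &&
        ((u == (cpE k').1 && areach fuel (k' + 1) (cpE k').2 v) ||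
         (u == (cpE k').2 && areach fuel (k' + 1) (cpE k').1 v)))

lemma cpLab_lt_cpLab {r0 b0 : ℕ} (hb : r0 + 19 ≤ b0) {k k' : ℕ}
    (h : k < k') (h' : k' < 38) : cpLab r0 b0 k < cpLab r0 b0 k' := by
  unfold cpLab
  split <;> split <;> omega

lemma areach_succ_of_areach : ∀ (f : ℕ) {k u v : ℕ},
    areach f k u v = true → areach (f + 1) k u v = true := by
  intro f
  induction f with
  | zero =>
    intro k u v h
    have he : u = v := by simpa [areach] using h
    simp [areach, he]
  | succ f ih =>
    intro k u v h
    rw [areach] at h ⊢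
    simp only [Bool.or_eq_true, List.any_eq_true, Bool.and_eq_true] at h ⊢
    rcases h with h | ⟨k', hk', h1, ⟨h3, h4⟩ | ⟨h3, h4⟩⟩
    · exact Or.inl h
    · exact Or.inr ⟨k', hk', h1, Or.inl ⟨h3, ih h4⟩⟩
    · exact Or.inr ⟨k', hk', h1, Or.inr ⟨h3, ih h4⟩⟩

lemma areach_of_areach_le {f g : ℕ} (hfg : f ≤ g) {k u v : ℕ}
    (h : areach f k u v = true) : areach g k u v = true := by
  induction g, hfg using Nat.le_induction with
  | base => exact h
  | succ g _ ih => exact areach_succ_of_areach g ih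

lemma redList_getD : ∀ i < 20, redList.getD i 0 = i + 1 := by decide

lemma cpE_ne : ∀ k < 38, (cpE k).1 ≠ (cpE k).2 := by decide

set_option maxRecDepth 10000 in
lemma areach_false :
    ∀ s ∈ [17, 18, 19, 20], ∀ t ∈ [1, 2, 5, 7], areach 38 0 s t = false := by
  decide

set_option maxHeartbeats 1000000 in
/-- In any connector path, for every `s ∈ {17,18,19,20}` and every
`t ∈ {1,2,5,7}` there is no temporal path from `s` to `t`. -/
theorem connectorPath_no_path_late_to_early (T : TemporalGraph ℕ)
    (hT : IsConnectorPath T) (s t : ℕ)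
    (hs : s ∈ ({17, 18, 19, 20} : Set ℕ)) (ht : t ∈ ({1, 2, 5, 7} : Set ℕ)) :
    ¬ TReach T (· ≤ ·) s t := by
  rintro ⟨verts, times, hp, hhead, hlast, -⟩
  obtain ⟨-, r0, b0, -, hb, hA, hRL, hBL⟩ := hT
  have hredD := redList_getD
  have hEne := cpE_ne
  set L := times.length with hLdef
  have hlen : verts.length = L + 1 := hp.length_eq
  have hs0 : verts.getD 0 0 = s := by
    cases verts with
    | nil => simp at hhead
    | cons a l =>
      simp only [List.head?_cons, Option.some.injEq] at hhead
      simpa [List.getD] using hhead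
  have hsL : verts.getD L 0 = t := by
    have h2 := List.getLast?_eq_getElem? (l := verts)
    rw [hlast] at h2
    have h3 : verts.length - 1 = L := by omega
    rw [h3, List.getElem?_eq_getElem (by omega)] at h2
    rw [List.getD_eq_getElem _ _ (by omega)]
    exact (Option.some.inj h2).symm
  have hex : ∀ i, i < L → ∃ k, k < 38 ∧
      ((verts.getD i 0 = (cpE k).1 ∧ verts.getD (i+1) 0 = (cpE k).2) ∨
       (verts.getD i 0 = (cpE k).2 ∧ verts.getD (i+1) 0 = (cpE k).1)) ∧
      times.getD i 0 = cpLab r0 b0 k := by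
    intro i h
    have ha := hp.adj i h
    have hl := hp.mem_lab i h
    rw [hA] at ha
    have e1 : verts[i]'(by omega) = verts.getD i 0 :=
      (List.getD_eq_getElem _ _ (by omega)).symm
    have e2 : verts[i+1]'(by omega) = verts.getD (i+1) 0 :=
      (List.getD_eq_getElem _ _ (by omega)).symm
    have e3 : times[i]'h = times.getD i 0 :=
      (List.getD_eq_getElem _ _ (by omega)).symm
    rw [e1, e2] at ha
    rw [e1, e2, e3] at hl
    rcases ha with ⟨j, hj, hey⟩ | ⟨j, hj, hey⟩
    · refine ⟨j, by omega, ?_, ?_⟩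
      · have hg1 : redList.getD j 0 = j + 1 := hredD j (by omega)
        have hg2 : redList.getD (j+1) 0 = j + 2 := hredD (j+1) (by omega)
        rw [hg1, hg2] at hey
        have hE : cpE j = (j+1, j+2) := by simp [cpE, hj]
        rcases Sym2.eq_iff.mp hey with ⟨h1, h2⟩ | ⟨h1, h2⟩
        · left; rw [hE]; exact ⟨h1, h2⟩
        · right; rw [hE]; exact ⟨h1, h2⟩
      · rw [hey, hRL j hj] at hl
        have h4 : times.getD i 0 = r0 + j := Finset.mem_singleton.mp hl
        rw [h4, cpLab, if_pos hj]
    · refine ⟨19 + j, by omega, ?_, ?_⟩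
      · have hE : cpE (19 + j) = (blueList.getD j 0, blueList.getD (j+1) 0) := by
          have h1 : ¬ (19 + j < 19) := by omega
          have h2 : 19 + j - 19 = j := by omega
          have h3 : 19 + j - 18 = j + 1 := by omega
          simp [cpE, h1, h2, h3]
        rcases Sym2.eq_iff.mp hey with ⟨h1, h2⟩ | ⟨h1, h2⟩
        · left; rw [hE]; exact ⟨h1, h2⟩
        · right; rw [hE]; exact ⟨h1, h2⟩
      · rw [hey, hBL j hj] at hl
        have h4 : times.getD i 0 = b0 + j := Finset.mem_singleton.mp hl
        have h1 : ¬ (19 + j < 19) := by omega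
        have h2 : 19 + j - 19 = j := by omega
        rw [h4, cpLab, if_neg h1, h2]
  have hex' : ∀ i, ∃ k, i < L → (k < 38 ∧
      ((verts.getD i 0 = (cpE k).1 ∧ verts.getD (i+1) 0 = (cpE k).2) ∨
       (verts.getD i 0 = (cpE k).2 ∧ verts.getD (i+1) 0 = (cpE k).1)) ∧
      times.getD i 0 = cpLab r0 b0 k) := by
    intro i
    by_cases h : i < L
    · obtain ⟨k, hk⟩ := hex i h
      exact ⟨k, fun _ => hk⟩
    · exact ⟨0, fun h' => absurd h' h⟩
  choose key hkey using hex'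
  have hchain : ∀ i, i + 1 < L → times.getD i 0 ≤ times.getD (i+1) 0 := by
    intro i h
    have hc := List.isChain_iff_getElem.mp hp.mono i (by omega)
    rw [List.getD_eq_getElem _ _ (by omega : i < times.length),
        List.getD_eq_getElem _ _ (by omega : i + 1 < times.length)]
    simpa [List.get_eq_getElem] using hc
  have hkeylt : ∀ i, i + 1 < L → key i < key (i+1) := by
    intro i h
    obtain ⟨hk1, hP1, ht1⟩ := hkey i (by omega)
    obtain ⟨hk2, hP2, ht2⟩ := hkey (i+1) h
    have hle : cpLab r0 b0 (key i) ≤ cpLab r0 b0 (key (i+1)) := by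
      rw [← ht1, ← ht2]; exact hchain i h
    rcases Nat.lt_trichotomy (key i) (key (i+1)) with hlt | heq | hgt
    · exact hlt
    · exfalso
      have hne12 : verts.getD i 0 ≠ verts.getD (i+1+1) 0 := by
        rw [List.getD_eq_getElem _ _ (show i < verts.length by omega),
            List.getD_eq_getElem _ _ (show i + 1 + 1 < verts.length by omega)]
        intro hcon
        have hf := (List.Nodup.getElem_inj_iff hp.nodup).mp hcon
        omega
      have hEne' := hEne (key (i+1)) hk2
      rw [heq] at hP1
      rcases hP1 with ⟨ha1, ha2⟩ | ⟨ha1, ha2⟩ <;>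
        rcases hP2 with ⟨hb1, hb2⟩ | ⟨hb1, hb2⟩ <;> omega
    · exfalso
      have := cpLab_lt_cpLab hb hgt hk1
      omega
  have hLle : L ≤ 38 := by
    by_contra hcon
    push_neg at hcon
    have hkj : ∀ j, j < L → j ≤ key j := by
      intro j
      induction j with
      | zero => intro _; exact Nat.zero_le _
      | succ j ih =>
        intro h
        have h1 := hkeylt j h
        have h2 := ih (by omega)
        omega
    have h38 := hkj 38 (by omega)
    have := (hkey 38 (by omega)).1
    omega
  have main : ∀ m i k, i + m = L → (i < L → k ≤ key i) →
      areach m k (verts.getD i 0) (verts.getD L 0) = true := by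
    intro m
    induction m with
    | zero =>
      intro i k hiL _
      have : i = L := by omega
      subst this
      simp [areach]
    | succ m ih =>
      intro i k hiL hklei
      have hi : i < L := by omega
      obtain ⟨hk38, hP, -⟩ := hkey i hi
      have hrec := ih (i+1) (key i + 1) (by omega) (fun h => hkeylt i h)
      rw [areach]
      simp only [Bool.or_eq_true, List.any_eq_true, Bool.and_eq_true,
        decide_eq_true_eq, beq_iff_eq]
      refine Or.inr ⟨key i, List.mem_range.mpr hk38, hklei hi, ?_⟩
      rcases hP with ⟨h1, h2⟩ | ⟨h1, h2⟩
      · exact Or.inl ⟨h1, by rw [← h2]; exact hrec⟩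
      · exact Or.inr ⟨h1, by rw [← h2]; exact hrec⟩
  have hreach : areach 38 0 s t = true := by
    have hm := main L 0 0 (by omega) (fun _ => Nat.zero_le _)
    rw [hs0, hsL] at hm
    exact areach_of_areach_le hLle hm
  simp only [Set.mem_insert_iff, Set.mem_singleton_iff] at hs ht
  rcases hs with rfl | rfl | rfl | rfl <;> rcases ht with rfl | rfl | rfl | rfl <;>
    · rw [areach_false _ (by decide) _ (by decide)] at hreach
      simp at hreach
end

section
/- Let 𝒢 be a simple undirected temporal graph with strict reachability, and let S be an inclusion-minimal vertex set with |S| ≥ 3 such that the induced temporal subgraph 𝒢[S] is temporally connected (i.e., no proper subset S' ⊆ S with |S'| ≥ 3 induces a temporally connected subgraph). Then the induced underlying graph G[S] is 2-vertex-connected. -/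
section Helpers



variable {V : Type*}

private lemma list_length_le {α : Type*} [DecidableEq α] {l : List α} (h : l.Nodup)
    (s : Finset α) (hs : ∀ x ∈ l, x ∈ s) : l.length ≤ s.card := by
  calc l.length = l.toFinset.card := (List.toFinset_card_of_nodup h).symm
  _ ≤ s.card := Finset.card_le_card (fun x hx => hs x (List.mem_toFinset.mp hx))

private lemma reach_of_list (H : SimpleGraph V) (S : Set V) :
    ∀ (l : List V), l.Chain' H.Adj → (∀ x ∈ l, x ∈ S) →
    ∀ (u w : S), l.head? = some ↑u → l.getLast? = some ↑w →
    (H.induce S).Reachable u w := by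
  intro l
  induction l with
  | nil => intro _ _ u w h _; simp at h
  | cons x l' IH =>
    intro hchain hmem u w hh hl
    cases l' with
    | nil =>
      simp only [List.head?_cons, Option.some_inj] at hh
      simp only [List.getLast?_singleton, Option.some_inj] at hl
      have : u = w := Subtype.ext (hh.symm.trans hl)
      subst this
      exact SimpleGraph.Reachable.refl u
    | cons y l'' =>
      have hxy : H.Adj x y := (List.isChain_cons_cons.mp hchain).1
      have hchain' := (List.isChain_cons_cons.mp hchain).2
      have hyS : y ∈ S := hmem y (by simp)
      simp only [List.head?_cons, Option.some_inj] at hh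
      have hl' : (y :: l'').getLast? = some ↑w := by
        rw [← List.getLast?_cons_cons (a := x)]; exact hl
      have h1 : (H.induce S).Adj u ⟨y, hyS⟩ := by
        simp only [SimpleGraph.comap_adj, Function.Embedding.coe_subtype]
        rw [← hh]; exact hxy
      exact h1.reachable.trans
        (IH hchain' (fun z hz => hmem z (List.mem_cons_of_mem _ hz)) ⟨y, hyS⟩ w rfl hl')

end Helpers

private lemma shrink {V : Type*} (T : TemporalGraph V) (r : ℕ → ℕ → Prop)
    (S C : Set V) (w : V)
    (hclosed : ∀ x ∈ C, ∀ y ∈ S, y ≠ w → T.G.Adj x y → y ∈ C)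
    {x y : V} (hx : x ∈ C ∪ {w}) (hy : y ∈ C ∪ {w})
    (h : TReachWithin T r S x y) : TReachWithin T r (C ∪ {w}) x y := by
  classical
  obtain ⟨verts, times, hp, hh, hl, hmem⟩ := h
  refine ⟨verts, times, hp, hh, hl, ?_⟩
  by_contra hcon
  push_neg at hcon
  obtain ⟨z, hz, hzC⟩ := hcon
  obtain ⟨k, hk, hzk⟩ := List.mem_iff_getElem.mp hz
  have hn : verts.length = times.length + 1 := hp.length_eq
  set n := verts.length with hndef
  set p : ℕ → Prop := fun i => ∃ h : i < n, verts[i]'h ∉ C ∪ {w} with hpdef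
  haveI : DecidablePred p := fun _ => Classical.dec _
  have hpk : p k := ⟨hk, by rwa [hzk]⟩
  have hex : ∃ i, p i := ⟨k, hpk⟩
  set i0 := Nat.find hex with hi0def
  obtain ⟨hi0n, hi0⟩ := Nat.find_spec hex
  -- head and last
  have hnpos : 0 < n := by omega
  have hv0 : verts[0]'hnpos = x := by
    have : verts.head? = verts[0]? := List.head?_eq_getElem?
    rw [hh, List.getElem?_eq_getElem hnpos] at this
    exact (Option.some_inj.mp this).symm
  have hvlast : verts[n-1]'(by omega) = y := by
    have : verts.getLast? = verts[n - 1]? := List.getLast?_eq_getElem?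
    rw [hl, List.getElem?_eq_getElem (by omega : n - 1 < n)] at this
    exact (Option.some_inj.mp this).symm
  have hnp0 : ¬ p 0 := fun ⟨h0, hc⟩ => hc (hv0 ▸ hx)
  have hi0pos : 0 < i0 := by
    rcases Nat.eq_zero_or_pos i0 with h | h
    · exact absurd (h ▸ (⟨hi0n, hi0⟩ : p i0)) hnp0
    · exact h
  have hprev : verts[i0-1]'(by omega) ∈ C ∪ {w} := by
    by_contra hc
    exact Nat.find_min hex (by omega : i0 - 1 < i0) ⟨by omega, hc⟩
  have hadj1 : T.G.Adj (verts[i0-1]'(by omega)) (verts[i0]'hi0n) := by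
    have h1 : i0 - 1 < times.length := by omega
    have := hp.adj (i0-1) h1
    have e : i0 - 1 + 1 = i0 := by omega
    simp only [e] at this
    exact this
  have hwprev : verts[i0-1]'(by omega) = w := by
    rcases hprev with hC | hw
    · exfalso
      refine hi0 (Or.inl (hclosed _ hC _ (hmem _ (List.getElem_mem hi0n)) ?_ hadj1))
      intro he
      exact hi0 (Or.inr he)
    · exact hw
  -- greatest
  set j0 := Nat.findGreatest p (n-1) with hj0def
  have hj0p : p j0 := Nat.findGreatest_spec (by omega : k ≤ n - 1) hpk
  obtain ⟨hj0n, hj0⟩ := hj0p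
  have hj0le : j0 ≤ n - 1 := Nat.findGreatest_le _
  have hj0ne : j0 ≠ n - 1 := by
    intro he
    simp only [he] at hj0
    exact hj0 (hvlast ▸ hy)
  have hj1n : j0 + 1 < n := by omega
  have hnext : verts[j0+1]'hj1n ∈ C ∪ {w} := by
    by_contra hc
    exact Nat.findGreatest_is_greatest (by omega : j0 < j0 + 1) (by omega : j0 + 1 ≤ n - 1)
      ⟨hj1n, hc⟩
  have hadj2 : T.G.Adj (verts[j0]'hj0n) (verts[j0+1]'hj1n) := hp.adj j0 (by omega)
  have hwnext : verts[j0+1]'hj1n = w := by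
    rcases hnext with hC | hw
    · exfalso
      refine hj0 (Or.inl (hclosed _ hC _ (hmem _ (List.getElem_mem hj0n)) ?_ hadj2.symm))
      intro he
      exact hj0 (Or.inr he)
    · exact hw
  have hij : i0 ≤ j0 := by
    by_contra hc
    exact Nat.findGreatest_is_greatest (by omega : j0 < i0) (by omega : i0 ≤ n - 1) ⟨hi0n, hi0⟩
  have heq : verts[i0-1]'(by omega) = verts[j0+1]'hj1n := by rw [hwprev, hwnext]
  have := (hp.nodup.getElem_inj_iff).mp heq
  omega



private lemma three_path {V : Type*} (T : TemporalGraph V) (r : ℕ → ℕ → Prop) {x y z : V}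
    (hxz : x ≠ z) (hnadj : ¬ T.G.Adj x z)
    (h : TReachWithin T r ({x, y, z} : Set V) x z) :
    ∃ t1 t2, r t1 t2 ∧ t1 ∈ T.lab s(x, y) ∧ t2 ∈ T.lab s(y, z) ∧
      T.G.Adj x y ∧ T.G.Adj y z := by
  classical
  obtain ⟨verts, times, hp, hh, hl, hmem⟩ := h
  have hlen : verts.length ≤ 3 := by
    have h1 : verts.length ≤ ({x, y, z} : Finset V).card :=
      list_length_le hp.nodup _ (fun c hc => by
        have := hmem c hc
        simp only [Set.mem_insert_iff, Set.mem_singleton_iff] at this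
        simp only [Finset.mem_insert, Finset.mem_singleton]
        exact this)
    have h2 : ({x, y, z} : Finset V).card ≤ 3 := by
      apply le_trans (Finset.card_insert_le _ _)
      have := Finset.card_insert_le y ({z} : Finset V)
      simp only [Finset.card_singleton] at this ⊢
      omega
    omega
  match verts, hp, hh, hl, hmem, hlen with
  | [], hp, hh, hl, hmem, hlen => simp at hh
  | [c1], hp, hh, hl, hmem, hlen =>
    simp only [List.head?_cons, Option.some_inj] at hh
    simp only [List.getLast?_singleton, Option.some_inj] at hl
    exact absurd (hh ▸ hl ▸ rfl) hxz
  | [c1, c2], hp, hh, hl, hmem, hlen =>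
    simp only [List.head?_cons, Option.some_inj] at hh
    simp only [List.getLast?_cons_cons, List.getLast?_singleton, Option.some_inj] at hl
    have hlen2 : times.length = 1 := by have := hp.length_eq; simp at this; omega
    have := hp.adj 0 (by omega)
    simp only [List.getElem_cons_zero, List.getElem_cons_succ] at this
    exact absurd (hh ▸ hl ▸ this) hnadj
  | c1 :: c2 :: c3 :: rest, hp, hh, hl, hmem, hlen =>
    have hrest : rest = [] := by
      cases rest with
      | nil => rfl
      | cons c4 rest' => simp at hlen; omega
    subst hrest
    simp only [List.head?_cons, Option.some_inj] at hh
    simp only [List.getLast?_cons_cons, List.getLast?_singleton, Option.some_inj] at hl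
    subst hh; subst hl
    have hc2 : c2 = y := by
      have hmem2 := hmem c2 (by simp)
      simp only [Set.mem_insert_iff, Set.mem_singleton_iff] at hmem2
      have hnd := hp.nodup
      simp only [List.nodup_cons, List.mem_cons, List.mem_singleton] at hnd
      rcases hmem2 with h | h | h
      · exact absurd h.symm (by tauto)
      · exact h
      · exact absurd h (by tauto)
    subst hc2
    have hlen2 : times.length = 2 := by have := hp.length_eq; simp at this; omega
    match times, hp, hlen2 with
    | [t1, t2], hp, _ =>
      have hmono : r t1 t2 := by
        have := hp.mono
        simp only [List.Chain', List.isChain_cons_cons, List.isChain_singleton, and_true] at this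
        exact this
      have h1 := hp.mem_lab 0 (by simp)
      have h2 := hp.mem_lab 1 (by simp)
      have ha1 := hp.adj 0 (by simp)
      have ha2 := hp.adj 1 (by simp)
      simp only [List.getElem_cons_zero, List.getElem_cons_succ] at h1 h2 ha1 ha2
      exact ⟨t1, t2, hmono, h1, h2, ha1, ha2⟩

/-- If `S` (with `|S| ≥ 3`) induces a temporally connected subgraph of a simple
undirected temporal graph under strict reachability, and is inclusion-minimal with this
property (no proper subset of size at least 3 induces a temporally connected subgraph), then
the induced underlying graph `G[S]` is 2-vertex-connected: it is connected, has at least 3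
vertices, and stays connected after removing any single vertex. -/
theorem minimal_closed_tcc_twoConnected {V : Type*} [Fintype V]
    (T : TemporalGraph V) (hsimple : T.Simple)
    (S : Set V) (h3 : 3 ≤ S.ncard)
    (htc : TemporallyConnectedOn T (· < ·) S)
    (hmin : ∀ S' : Set V, S' ⊆ S → S' ≠ S → 3 ≤ S'.ncard →
      ¬ TemporallyConnectedOn T (· < ·) S') :
    (T.G.induce S).Connected ∧ 3 ≤ S.ncard ∧
      ∀ v : S, ((T.G.induce S).induce {u : S | u ≠ v}).Connected := by
  classical
  have hSfin : S.Finite := Set.toFinite S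
  have hSne : S.Nonempty := by
    rw [← Set.ncard_pos hSfin]; omega
  have hconn : (T.G.induce S).Connected := by
    rw [SimpleGraph.connected_iff]
    refine ⟨?_, ⟨⟨hSne.choose, hSne.choose_spec⟩⟩⟩
    intro u w
    by_cases huw : (u : V) = (w : V)
    · have : u = w := Subtype.ext huw
      subst this; exact SimpleGraph.Reachable.refl u
    · obtain ⟨verts, times, hp, hh, hl, hmem⟩ := htc u u.2 w w.2 huw
      have hchain : verts.Chain' T.G.Adj := by
        unfold List.Chain'; rw [List.isChain_iff_getElem]
        intro i hi
        have hi' : i < times.length := by have := hp.length_eq; omega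
        have := hp.adj i hi'
        simpa [List.get_eq_getElem] using this
      exact reach_of_list T.G S verts hchain hmem u w hh hl
  refine ⟨hconn, h3, ?_⟩
  intro v
  rw [SimpleGraph.connected_iff]
  constructor
  · -- preconnected after deleting v
    intro a b
    by_cases hab : a = b
    · subst hab; exact SimpleGraph.Reachable.refl a
    by_contra hnr
    set v' : V := ↑↑v with hv'def
    have hvS : v' ∈ S := v.2
    set A : Set V := {x : V | ∃ (hx : x ∈ S) (hnv : (⟨x, hx⟩ : S) ≠ v),
      ((T.G.induce S).induce {u : S | u ≠ v}).Reachable a ⟨⟨x, hx⟩, hnv⟩} with hAdef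
    have hAsub : A ⊆ S := fun x hx => hx.1
    have hAnv : ∀ x ∈ A, x ≠ v' := by
      rintro x ⟨hx, hnv, -⟩ h
      exact hnv (Subtype.ext h)
    have hclosedA : ∀ x ∈ A, ∀ y ∈ S, y ≠ v' → T.G.Adj x y → y ∈ A := by
      rintro x ⟨hx, hnv, hr⟩ y hy hyv hadj
      have hynv : (⟨y, hy⟩ : S) ≠ v := fun h => hyv (congrArg Subtype.val h)
      exact ⟨hy, hynv, hr.trans (SimpleGraph.Adj.reachable hadj)⟩
    have haA : (↑↑a : V) ∈ A := ⟨(↑a : S).2, a.2, SimpleGraph.Reachable.refl a⟩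
    have hbS : (↑↑b : V) ∈ S := (↑b : S).2
    have hbv : (↑↑b : V) ≠ v' := fun h => b.2 (Subtype.ext h)
    have hbA : (↑↑b : V) ∉ A := by
      rintro ⟨hx, hnv, hr⟩
      exact hnr hr
    set B : Set V := S \ (A ∪ {v'}) with hBdef
    have hbB : (↑↑b : V) ∈ B := ⟨hbS, by
      rintro (h | h)
      · exact hbA h
      · exact hbv h⟩
    have hBsub : B ⊆ S := fun x hx => hx.1
    have hclosedB : ∀ x ∈ B, ∀ y ∈ S, y ≠ v' → T.G.Adj x y → y ∈ B := by
      rintro x ⟨hxS, hxA⟩ y hy hyv hadj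
      refine ⟨hy, ?_⟩
      rintro (hyA | hyv')
      · exact hxA (Or.inl (hclosedA y hyA x hxS (fun h => hxA (Or.inr h)) hadj.symm))
      · exact hyv hyv'
    have htcA : TemporallyConnectedOn T (· < ·) (A ∪ {v'}) := by
      intro x hx y hy hxy
      have hxS : x ∈ S := by rcases hx with h | h; exacts [hAsub h, h ▸ hvS]
      have hyS : y ∈ S := by rcases hy with h | h; exacts [hAsub h, h ▸ hvS]
      exact shrink T _ S A v' hclosedA hx hy (htc x hxS y hyS hxy)
    have htcB : TemporallyConnectedOn T (· < ·) (B ∪ {v'}) := by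
      intro x hx y hy hxy
      have hxS : x ∈ S := by rcases hx with h | h; exacts [hBsub h, h ▸ hvS]
      have hyS : y ∈ S := by rcases hy with h | h; exacts [hBsub h, h ▸ hvS]
      exact shrink T _ S B v' hclosedB hx hy (htc x hxS y hyS hxy)
    have hvA : v' ∉ A := fun h => hAnv v' h rfl
    have hvB : v' ∉ B := fun h => h.2 (Or.inr rfl)
    by_cases hA2 : 2 ≤ A.ncard
    · refine hmin (A ∪ {v'}) ?_ ?_ ?_ htcA
      · rintro x (h | h); exacts [hAsub h, h ▸ hvS]
      · intro he
        have hmem : (↑↑b : V) ∈ A ∪ {v'} := by rw [he]; exact hbS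
        rcases hmem with h | h
        · exact hbA h
        · exact hbv h
      · rw [Set.union_singleton, Set.ncard_insert_of_notMem hvA]
        omega
    by_cases hB2 : 2 ≤ B.ncard
    · have haB : (↑↑a : V) ∉ B := fun h => h.2 (Or.inl haA)
      have hav : (↑↑a : V) ≠ v' := fun h => a.2 (Subtype.ext h)
      refine hmin (B ∪ {v'}) ?_ ?_ ?_ htcB
      · rintro x (h | h); exacts [hBsub h, h ▸ hvS]
      · intro he
        have hmem : (↑↑a : V) ∈ B ∪ {v'} := by rw [he]; exact (↑a : S).2
        rcases hmem with h | h
        · exact haB h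
        · exact hav h
      · rw [Set.union_singleton, Set.ncard_insert_of_notMem hvB]
        omega
    -- Now A = {a'} and B = {b'}, so S = {a', v', b'}
    set a' : V := ↑↑a with ha'def
    set b' : V := ↑↑b with hb'def
    have hAa : A = {a'} := by
      have h1 : A.ncard = 1 := by
        have h0 : 0 < A.ncard := (Set.ncard_pos (Set.toFinite _)).mpr ⟨a', haA⟩
        omega
      obtain ⟨c, hc⟩ := Set.ncard_eq_one.mp h1
      rw [hc] at haA ⊢
      rw [Set.mem_singleton_iff] at haA
      rw [haA]
    have hBb : B = {b'} := by
      have h1 : B.ncard = 1 := by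
        have h0 : 0 < B.ncard := (Set.ncard_pos (Set.toFinite _)).mpr ⟨b', hbB⟩
        omega
      obtain ⟨c, hc⟩ := Set.ncard_eq_one.mp h1
      rw [hc] at hbB ⊢
      rw [Set.mem_singleton_iff] at hbB
      rw [hbB]
    have hav : a' ≠ v' := fun h => a.2 (Subtype.ext h)
    have hvb : v' ≠ b' := fun h => hbv h.symm
    have hab' : a' ≠ b' := fun h => hab (Subtype.ext (Subtype.ext h))
    have hSeq : S = {a', v', b'} := by
      ext x
      constructor
      · intro hxS
        by_cases hxv : x = v'
        · exact Or.inr (Or.inl hxv)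
        by_cases hxA : x ∈ A
        · exact Or.inl (by rw [hAa] at hxA; exact hxA)
        · refine Or.inr (Or.inr ?_)
          have hxB : x ∈ B := ⟨hxS, by
            rintro (h | h)
            · exact hxA h
            · exact hxv h⟩
          rw [hBb] at hxB; exact hxB
      · rintro (h | h | h)
        · exact h ▸ (↑a : S).2
        · exact h ▸ hvS
        · exact h ▸ hbS
    have hnadj : ¬ T.G.Adj a' b' := by
      intro hadj
      exact hbA (hclosedA a' haA b' hbS hbv hadj)
    have hnadj' : ¬ T.G.Adj b' a' := fun h => hnadj h.symm
    have hp1 : TReachWithin T (· < ·) ({a', v', b'} : Set V) a' b' := by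
      rw [← hSeq]; exact htc a' (↑a : S).2 b' hbS hab'
    have hp2 : TReachWithin T (· < ·) ({b', v', a'} : Set V) b' a' := by
      have hset : ({b', v', a'} : Set V) = {a', v', b'} := by
        ext x; simp only [Set.mem_insert_iff, Set.mem_singleton_iff]; tauto
      rw [hset, ← hSeq]; exact htc b' hbS a' (↑a : S).2 hab'.symm
    obtain ⟨t1, t2, ht12, ht1, ht2, hadj1, hadj2⟩ := three_path T _ hab' hnadj hp1
    obtain ⟨u1, u2, hu12, hu1, hu2, -, -⟩ := three_path T _ hab'.symm hnadj' hp2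
    -- labels: edge {a', v'} and edge {v', b'} each have a single label
    have he1 : s(a', v') ∈ T.G.edgeSet := T.G.mem_edgeSet.mpr hadj1
    have he2 : s(v', b') ∈ T.G.edgeSet := T.G.mem_edgeSet.mpr hadj2
    obtain ⟨c1, hc1⟩ := Finset.card_eq_one.mp (hsimple _ he1)
    obtain ⟨c2, hc2⟩ := Finset.card_eq_one.mp (hsimple _ he2)
    have hu2' : u2 ∈ T.lab s(a', v') := by rwa [Sym2.eq_swap] at hu2
    have hu1' : u1 ∈ T.lab s(v', b') := by rwa [Sym2.eq_swap] at hu1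
    rw [hc1, Finset.mem_singleton] at ht1 hu2'
    rw [hc2, Finset.mem_singleton] at ht2 hu1'
    have h12 : t1 < t2 := ht12
    have h12' : u1 < u2 := hu12
    omega
  · -- nonempty
    obtain ⟨u, hu, hune⟩ := Set.exists_ne_of_one_lt_ncard (s := S) (by omega) (↑v : V)
    exact ⟨⟨⟨u, hu⟩, fun h => hune (congrArg Subtype.val h)⟩⟩
end
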